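/- arXiv:1411.3113 — 2 statements merged into one kernel-verified Lean document; each statement's English description precedes it below -/
import Mathlib

section
/- (Growth bound on the observed part of the error.) Let F > 0, K = 2JF², and β = 2(2√K − 1), and assume β > 0. Let u and v be solutions of the Lorenz '96 equation on [0,h] with |v(t)|² ≤ K for all t ∈ [0,h]. Set δ(t) = u(t) − v(t), R0 = |δ(0)| + |Pδ(0)|, and A1(t) = (16K/β)(e^{βt} − 1) + (2R0²/β)(e^{2βt} − 1). Then for all t ∈ [0,h], |Pδ(t)|² ≤ A1(t)·|δ(0)|² + |Pδ(0)|². -/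
open scoped RealInnerProductSpace

noncomputable section

/-- The Lorenz '96 bilinear map `B` on `ℝ^J`, with cyclic indexing via `ZMod J`:
`B(u,w)^(j) = -(1/2)[w^(j-1)u^(j+1) + u^(j-1)w^(j+1) - w^(j-2)u^(j-1) - u^(j-2)w^(j-1)]`. -/
def L96B {J : ℕ} [NeZero J] (u w : EuclideanSpace ℝ (ZMod J)) :
    EuclideanSpace ℝ (ZMod J) :=
  WithLp.toLp 2 (fun j => -(1/2 : ℝ) * (w (j - 1) * u (j + 1) + u (j - 1) * w (j + 1)
    - w (j - 2) * u (j - 1) - u (j - 2) * w (j - 1)))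

/-- The constant forcing vector `f = (F, ..., F)`. -/
def L96f {J : ℕ} [NeZero J] (F : ℝ) : EuclideanSpace ℝ (ZMod J) := WithLp.toLp 2 (fun _ => F)

/-- `u` solves the Lorenz '96 equation `u' = -u - B(u,u) + f` on the set `I`. -/
def L96Sol {J : ℕ} [NeZero J] (F : ℝ) (I : Set ℝ)
    (u : ℝ → EuclideanSpace ℝ (ZMod J)) : Prop :=
  ∀ t ∈ I, HasDerivAt u (-u t - L96B (u t) (u t) + L96f F) t

/-- The projection `P` setting to zero every third coordinate
(those with 1-based index `≡ 0 mod 3`, i.e. `ZMod J`-index with value `≡ 0 mod 3`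
when `3 ∣ J`). -/
def L96P {J : ℕ} [NeZero J] (u : EuclideanSpace ℝ (ZMod J)) :
    EuclideanSpace ℝ (ZMod J) :=
  WithLp.toLp 2 (fun j => if j.val % 3 = 0 then 0 else u j)

/-- The complementary projection `Q = I - P`. -/
def L96Q {J : ℕ} [NeZero J] (u : EuclideanSpace ℝ (ZMod J)) :
    EuclideanSpace ℝ (ZMod J) :=
  u - L96P u

variable {J : ℕ} [NeZero J]

lemma my_norm_sq_eq (x : EuclideanSpace ℝ (ZMod J)) : ‖x‖^2 = ∑ j, x j ^ 2 := by
  rw [EuclideanSpace.norm_eq, Real.sq_sqrt]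
  · simp [Real.norm_eq_abs, sq_abs]
  · positivity

lemma my_inner_eq (x y : EuclideanSpace ℝ (ZMod J)) : ⟪x, y⟫ = ∑ j, x j * y j := by
  rw [PiLp.inner_apply]; simp [RCLike.inner_apply]; exact Finset.sum_congr rfl (fun _ _ => mul_comm _ _)

lemma my_coord_sq_le (x : EuclideanSpace ℝ (ZMod J)) (j : ZMod J) : x j ^ 2 ≤ ‖x‖^2 := by
  rw [my_norm_sq_eq]
  exact Finset.single_le_sum (f := fun j => x j ^ 2) (fun i _ => sq_nonneg _) (Finset.mem_univ j)

lemma my_sum_shift (f : ZMod J → ℝ) (c : ZMod J) : ∑ j, f (j + c) = ∑ j, f j :=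
  Equiv.sum_comp (Equiv.addRight c) f

lemma my_abs_coord_le (x : EuclideanSpace ℝ (ZMod J)) (j : ZMod J) : |x j| ≤ ‖x‖ := by
  have h1 := my_coord_sq_le x j
  nlinarith [abs_nonneg (x j), norm_nonneg x, sq_abs (x j)]

lemma L96B_add_right (a b c : EuclideanSpace ℝ (ZMod J)) :
    L96B a (b + c) = L96B a b + L96B a c := by
  ext j
  simp only [L96B, PiLp.add_apply, PiLp.toLp_apply]
  ring

lemma L96B_sub_identity (u v : EuclideanSpace ℝ (ZMod J)) :
    L96B u u - L96B v v = L96B (u - v) u + L96B (u - v) v := by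
  ext j
  simp only [L96B, PiLp.add_apply, PiLp.sub_apply, PiLp.toLp_apply]
  ring

/-- key identity: `⟪B(a,w), a⟫ = -(1/2) ∑ j, w j * (a (j-1) * (a (j-2) - a (j+1)))`. -/
lemma inner_L96B_left (a w : EuclideanSpace ℝ (ZMod J)) :
    ⟪L96B a w, a⟫ = -(1/2) * ∑ j, w j * (a (j-1) * (a (j-2) - a (j+1))) := by
  rw [my_inner_eq]
  have h1 : ∑ j : ZMod J, w (j-2) * a (j-1) * a j
      = ∑ j : ZMod J, w (j-1) * a (j+1) * a j := by
    have := my_sum_shift (fun j => w (j-2) * a (j-1) * a j) 1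
    rw [← this]
    apply Finset.sum_congr rfl
    intro j _
    have e1 : j + 1 - 2 = j - 1 := by ring
    have e2 : j + 1 - 1 = j := by ring
    rw [e1, e2]; ring
  have h2 : ∑ j : ZMod J, a (j-1) * w (j+1) * a j
      = ∑ j : ZMod J, w j * (a (j-1) * a (j-2)) := by
    have := my_sum_shift (fun j => a (j-1) * w (j+1) * a j) (-1)
    rw [← this]
    apply Finset.sum_congr rfl
    intro j _
    have e1 : j + -1 - 1 = j - 2 := by ring
    have e2 : j + -1 + 1 = j := by ring
    have e3 : j + -1 = j - 1 := by ring
    rw [e1, e2, e3]; ring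
  have h4 : ∑ j : ZMod J, a (j-2) * w (j-1) * a j
      = ∑ j : ZMod J, w j * (a (j-1) * a (j+1)) := by
    have := my_sum_shift (fun j => a (j-2) * w (j-1) * a j) 1
    rw [← this]
    apply Finset.sum_congr rfl
    intro j _
    have e1 : j + 1 - 2 = j - 1 := by ring
    have e2 : j + 1 - 1 = j := by ring
    rw [e1, e2]; ring
  have expand : ∑ j : ZMod J, (L96B a w) j * a j
      = -(1/2) * ((∑ j : ZMod J, w (j-1) * a (j+1) * a j)
        + (∑ j : ZMod J, a (j-1) * w (j+1) * a j)
        - (∑ j : ZMod J, w (j-2) * a (j-1) * a j)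
        - (∑ j : ZMod J, a (j-2) * w (j-1) * a j)) := by
    rw [← Finset.sum_add_distrib, ← Finset.sum_sub_distrib, ← Finset.sum_sub_distrib,
      Finset.mul_sum]
    apply Finset.sum_congr rfl
    intro j _
    simp only [L96B, PiLp.toLp_apply]
    ring
  rw [expand, h1, h2, h4]
  rw [show ∀ S A B : ℝ, -(1/2) * (S + A - S - B) = -(1/2) * (A - B) from fun _ _ _ => by ring]
  rw [← Finset.sum_sub_distrib]
  congr 1
  apply Finset.sum_congr rfl
  intro j _
  ring

lemma my_sq_le (X Y : ℝ) (hX : 0 ≤ X) (hY : 0 ≤ Y) (h : X^2 ≤ Y^2) : X ≤ Y := by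
  nlinarith

/-- Cauchy–Schwarz style bound on shifted triple sums. -/
lemma my_triple_bound (w a : EuclideanSpace ℝ (ZMod J)) (c₁ c₂ : ZMod J) :
    ∑ j, |w j| * (|a (j + c₁)| * |a (j + c₂)|) ≤ ‖w‖ * ‖a‖^2 := by
  have hcs := Finset.sum_mul_sq_le_sq_mul_sq Finset.univ (fun j => |w j|)
    (fun j => |a (j + c₁)| * |a (j + c₂)|)
  have h1 : ∑ j : ZMod J, (|w j|)^2 = ‖w‖^2 := by
    rw [my_norm_sq_eq]; simp [sq_abs]
  have h2 : ∑ j : ZMod J, (|a (j + c₁)| * |a (j + c₂)|)^2 ≤ ‖a‖^2 * ‖a‖^2 := by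
    have hle : ∀ j : ZMod J, (|a (j + c₁)| * |a (j + c₂)|)^2
        ≤ ‖a‖^2 * (a (j + c₂))^2 := by
      intro j
      have := my_coord_sq_le a (j + c₁)
      have h0 := sq_nonneg (a (j + c₂))
      calc (|a (j + c₁)| * |a (j + c₂)|)^2 = (a (j+c₁))^2 * (a (j+c₂))^2 := by
            rw [mul_pow, sq_abs, sq_abs]
        _ ≤ ‖a‖^2 * (a (j + c₂))^2 := by nlinarith
    calc ∑ j : ZMod J, (|a (j + c₁)| * |a (j + c₂)|)^2
        ≤ ∑ j : ZMod J, ‖a‖^2 * (a (j + c₂))^2 :=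
          Finset.sum_le_sum (fun j _ => hle j)
      _ = ‖a‖^2 * ∑ j : ZMod J, (a (j + c₂))^2 := by rw [Finset.mul_sum]
      _ = ‖a‖^2 * ‖a‖^2 := by
          rw [my_sum_shift (fun j => (a j)^2) c₂, ← my_norm_sq_eq]
  apply my_sq_le
  · positivity
  · positivity
  · calc (∑ j, |w j| * (|a (j + c₁)| * |a (j + c₂)|))^2
        ≤ (∑ j : ZMod J, (|w j|)^2) * ∑ j : ZMod J, (|a (j + c₁)| * |a (j + c₂)|)^2 := hcs
      _ ≤ ‖w‖^2 * (‖a‖^2 * ‖a‖^2) := by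
          rw [h1]
          apply mul_le_mul_of_nonneg_left h2 (by positivity)
      _ = (‖w‖ * ‖a‖^2)^2 := by ring

lemma abs_inner_L96B_le (a w : EuclideanSpace ℝ (ZMod J)) :
    |⟪L96B a w, a⟫| ≤ ‖w‖ * ‖a‖^2 := by
  rw [inner_L96B_left]
  have hb : |∑ j, w j * (a (j-1) * (a (j-2) - a (j+1)))|
      ≤ ∑ j, |w j| * (|a (j + (-1))| * |a (j + (-2))|)
        + ∑ j, |w j| * (|a (j + (-1))| * |a (j + 1)|) := by
    calc |∑ j, w j * (a (j-1) * (a (j-2) - a (j+1)))|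
        ≤ ∑ j, |w j * (a (j-1) * (a (j-2) - a (j+1)))| := Finset.abs_sum_le_sum_abs _ _
      _ ≤ ∑ j : ZMod J, (|w j| * (|a (j + (-1))| * |a (j + (-2))|)
            + |w j| * (|a (j + (-1))| * |a (j + 1)|)) := by
          apply Finset.sum_le_sum
          intro j _
          have e1 : j + (-1) = j - 1 := by ring
          have e2 : j + (-2) = j - 2 := by ring
          rw [e1, e2, abs_mul, abs_mul]
          have : |a (j-2) - a (j+1)| ≤ |a (j-2)| + |a (j+1)| := abs_sub _ _
          calc |w j| * (|a (j-1)| * |a (j-2) - a (j+1)|)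
              = (|w j| * |a (j-1)|) * |a (j-2) - a (j+1)| := by ring
            _ ≤ (|w j| * |a (j-1)|) * (|a (j-2)| + |a (j+1)|) :=
                mul_le_mul_of_nonneg_left this (by positivity)
            _ = |w j| * (|a (j-1)| * |a (j-2)|) + |w j| * (|a (j-1)| * |a (j+1)|) := by ring
      _ = _ := Finset.sum_add_distrib
  have t1 := my_triple_bound w a (-1) (-2)
  have t2 := my_triple_bound w a (-1) 1
  calc |(-(1/2) : ℝ) * ∑ j, w j * (a (j-1) * (a (j-2) - a (j+1)))|
      = (1/2) * |∑ j, w j * (a (j-1) * (a (j-2) - a (j+1)))| := by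
        rw [abs_mul]; norm_num
    _ ≤ (1/2) * (‖w‖ * ‖a‖^2 + ‖w‖ * ‖a‖^2) := by
        have := le_trans hb (add_le_add t1 t2)
        linarith
    _ = ‖w‖ * ‖a‖^2 := by ring

lemma inner_L96B_self (a : EuclideanSpace ℝ (ZMod J)) : ⟪L96B a a, a⟫ = 0 := by
  rw [inner_L96B_left]
  have h : ∑ j : ZMod J, a j * (a (j-1) * a (j-2))
      = ∑ j : ZMod J, a j * (a (j-1) * a (j+1)) := by
    have := my_sum_shift (fun j => a j * (a (j-1) * a (j-2))) 1
    rw [← this]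
    apply Finset.sum_congr rfl
    intro j _
    have e1 : j + 1 - 2 = j - 1 := by ring
    have e2 : j + 1 - 1 = j := by ring
    rw [e1, e2]; ring
  have : ∑ j : ZMod J, a j * (a (j-1) * (a (j-2) - a (j+1)))
      = ∑ j : ZMod J, (a j * (a (j-1) * a (j-2)) - a j * (a (j-1) * a (j+1))) :=
    Finset.sum_congr rfl (fun j _ => by ring)
  rw [this, Finset.sum_sub_distrib, h]
  ring

lemma my_shift_sq_sum (a : EuclideanSpace ℝ (ZMod J)) (c : ZMod J) :
    ∑ j : ZMod J, (a (j + c))^2 = ‖a‖^2 := by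
  rw [my_sum_shift (fun j => (a j)^2) c, ← my_norm_sq_eq]

lemma norm_L96B_le (a b : EuclideanSpace ℝ (ZMod J)) :
    ‖L96B a b‖ ≤ 2 * ‖a‖ * ‖b‖ := by
  apply my_sq_le _ _ (norm_nonneg _) (by positivity)
  rw [my_norm_sq_eq]
  have hj : ∀ j : ZMod J, (L96B a b j)^2 ≤
      (b (j-1))^2 * (a (j+1))^2 + (a (j-1))^2 * (b (j+1))^2
      + (b (j-2))^2 * (a (j-1))^2 + (a (j-2))^2 * (b (j-1))^2 := by
    intro j
    simp only [L96B, PiLp.toLp_apply]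
    nlinarith [sq_nonneg (b (j-1) * a (j+1) - a (j-1) * b (j+1)),
      sq_nonneg (b (j-1) * a (j+1) + b (j-2) * a (j-1)),
      sq_nonneg (b (j-1) * a (j+1) + a (j-2) * b (j-1)),
      sq_nonneg (a (j-1) * b (j+1) + b (j-2) * a (j-1)),
      sq_nonneg (a (j-1) * b (j+1) + a (j-2) * b (j-1)),
      sq_nonneg (b (j-2) * a (j-1) - a (j-2) * b (j-1))]
  have hsum : ∀ (c₁ c₂ : ZMod J), ∑ j : ZMod J, (b (j+c₁))^2 * (a (j+c₂))^2
      ≤ ‖a‖^2 * ‖b‖^2 := by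
    intro c₁ c₂
    calc ∑ j : ZMod J, (b (j+c₁))^2 * (a (j+c₂))^2
        ≤ ∑ j : ZMod J, (b (j+c₁))^2 * ‖a‖^2 := by
          apply Finset.sum_le_sum
          intro j _
          exact mul_le_mul_of_nonneg_left (my_coord_sq_le a _) (sq_nonneg _)
      _ = ‖a‖^2 * ∑ j : ZMod J, (b (j+c₁))^2 := by
          rw [← Finset.sum_mul]; ring
      _ = ‖a‖^2 * ‖b‖^2 := by rw [my_shift_sq_sum]
  have e1 : ∀ j : ZMod J, (j : ZMod J) - 1 = j + (-1) := fun j => by ring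
  have e2 : ∀ j : ZMod J, (j : ZMod J) - 2 = j + (-2) := fun j => by ring
  have h1 : ∑ j : ZMod J, (b (j-1))^2 * (a (j+1))^2 ≤ ‖a‖^2 * ‖b‖^2 := by
    have := hsum (-1) 1
    calc ∑ j : ZMod J, (b (j-1))^2 * (a (j+1))^2
        = ∑ j : ZMod J, (b (j+(-1)))^2 * (a (j+1))^2 :=
          Finset.sum_congr rfl (fun j _ => by rw [e1])
      _ ≤ ‖a‖^2 * ‖b‖^2 := this
  have h2 : ∑ j : ZMod J, (a (j-1))^2 * (b (j+1))^2 ≤ ‖a‖^2 * ‖b‖^2 := by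
    have := hsum 1 (-1)
    calc ∑ j : ZMod J, (a (j-1))^2 * (b (j+1))^2
        = ∑ j : ZMod J, (b (j+1))^2 * (a (j+(-1)))^2 :=
          Finset.sum_congr rfl (fun j _ => by rw [e1]; ring)
      _ ≤ ‖a‖^2 * ‖b‖^2 := this
  have h3 : ∑ j : ZMod J, (b (j-2))^2 * (a (j-1))^2 ≤ ‖a‖^2 * ‖b‖^2 := by
    have := hsum (-2) (-1)
    calc ∑ j : ZMod J, (b (j-2))^2 * (a (j-1))^2
        = ∑ j : ZMod J, (b (j+(-2)))^2 * (a (j+(-1)))^2 :=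
          Finset.sum_congr rfl (fun j _ => by rw [e1, e2])
      _ ≤ ‖a‖^2 * ‖b‖^2 := this
  have h4 : ∑ j : ZMod J, (a (j-2))^2 * (b (j-1))^2 ≤ ‖a‖^2 * ‖b‖^2 := by
    have := hsum (-1) (-2)
    calc ∑ j : ZMod J, (a (j-2))^2 * (b (j-1))^2
        = ∑ j : ZMod J, (b (j+(-1)))^2 * (a (j+(-2)))^2 :=
          Finset.sum_congr rfl (fun j _ => by rw [e1, e2]; ring)
      _ ≤ ‖a‖^2 * ‖b‖^2 := this
  calc ∑ j : ZMod J, (L96B a b j)^2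
      ≤ ∑ j : ZMod J, ((b (j-1))^2 * (a (j+1))^2 + (a (j-1))^2 * (b (j+1))^2
        + (b (j-2))^2 * (a (j-1))^2 + (a (j-2))^2 * (b (j-1))^2) :=
        Finset.sum_le_sum (fun j _ => hj j)
    _ = (∑ j : ZMod J, (b (j-1))^2 * (a (j+1))^2) + (∑ j : ZMod J, (a (j-1))^2 * (b (j+1))^2)
        + (∑ j : ZMod J, (b (j-2))^2 * (a (j-1))^2)
        + (∑ j : ZMod J, (a (j-2))^2 * (b (j-1))^2) := by
        rw [Finset.sum_add_distrib, Finset.sum_add_distrib, Finset.sum_add_distrib]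
    _ ≤ 4 * (‖a‖^2 * ‖b‖^2) := by linarith
    _ = (2 * ‖a‖ * ‖b‖)^2 := by ring

lemma my_inner_P (x y : EuclideanSpace ℝ (ZMod J)) :
    ⟪L96P x, y⟫ = ⟪L96P x, L96P y⟫ := by
  rw [my_inner_eq, my_inner_eq]
  apply Finset.sum_congr rfl
  intro j _
  simp only [L96P, PiLp.toLp_apply]
  split_ifs <;> ring

lemma my_norm_P_sq (x : EuclideanSpace ℝ (ZMod J)) :
    ‖L96P x‖^2 = ∑ j ∈ Finset.univ.filter (fun j : ZMod J => ¬ j.val % 3 = 0), (x j)^2 := by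
  rw [my_norm_sq_eq, Finset.sum_filter]
  apply Finset.sum_congr rfl
  intro j _
  simp only [L96P, PiLp.toLp_apply]
  split_ifs <;> simp

lemma my_norm_P_le (x : EuclideanSpace ℝ (ZMod J)) : ‖L96P x‖ ≤ ‖x‖ := by
  apply my_sq_le _ _ (norm_nonneg _) (norm_nonneg _)
  rw [my_norm_P_sq, my_norm_sq_eq]
  apply Finset.sum_le_sum_of_subset_of_nonneg (Finset.filter_subset _ _)
  intros; positivity

lemma my_J_ge (hJ3 : 3 ∣ J) : 3 ≤ J := by
  rcases hJ3 with ⟨k, rfl⟩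
  have := NeZero.ne (3 * k)
  omega

lemma my_val_add_one (hJ3 : 3 ∣ J) (j : ZMod J) :
    ((j + 1).val) % 3 = (j.val + 1) % 3 := by
  haveI : Fact (1 < J) := ⟨by have := my_J_ge hJ3; omega⟩
  rw [ZMod.val_add, ZMod.val_one]
  exact Nat.mod_mod_of_dvd _ hJ3

lemma my_mod3_sub_one (hJ3 : 3 ∣ J) (j : ZMod J) (h : j.val % 3 = 0) :
    (j - 1).val % 3 = 2 := by
  have h1 := my_val_add_one hJ3 (j - 1)
  rw [sub_add_cancel] at h1
  omega

lemma my_mod3_add_one (hJ3 : 3 ∣ J) (j : ZMod J) (h : j.val % 3 = 0) :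
    (j + 1).val % 3 = 1 := by
  have h1 := my_val_add_one hJ3 j
  omega

lemma my_mod3_sub_two (hJ3 : 3 ∣ J) (j : ZMod J) (h : j.val % 3 = 0) :
    (j - 2).val % 3 = 1 := by
  have h1 := my_val_add_one hJ3 (j - 2)
  have e : j - 2 + 1 = j - 1 := by ring
  rw [e] at h1
  have h2 := my_mod3_sub_one hJ3 j h
  omega

lemma my_sum_inj_le (a : EuclideanSpace ℝ (ZMod J)) (φ : ZMod J → ZMod J)
    (hinj : Function.Injective φ) (S T : Finset (ZMod J))
    (hmap : ∀ j ∈ S, φ j ∈ T) :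
    ∑ j ∈ S, (a (φ j))^2 ≤ ∑ k ∈ T, (a k)^2 := by
  calc ∑ j ∈ S, (a (φ j))^2
      = ∑ k ∈ S.image φ, (a k)^2 :=
        (Finset.sum_image (f := fun k => a k ^ 2) (g := φ) (s := S)
          (fun x _ y _ h => hinj h)).symm
    _ ≤ ∑ k ∈ T, (a k)^2 := ?_
  apply Finset.sum_le_sum_of_subset_of_nonneg
  · intro k hk
    rcases Finset.mem_image.mp hk with ⟨j, hj, rfl⟩
    exact hmap j hj
  · intros; positivity

lemma abs_inner_L96B_P (hJ3 : 3 ∣ J) (a : EuclideanSpace ℝ (ZMod J)) :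
    |⟪L96B a a, L96P a⟫| ≤ ‖a‖ * ‖L96P a‖^2 := by
  classical
  set S0 := Finset.univ.filter (fun j : ZMod J => j.val % 3 = 0) with hS0
  set S1 := Finset.univ.filter (fun j : ZMod J => j.val % 3 = 1) with hS1
  set S2 := Finset.univ.filter (fun j : ZMod J => j.val % 3 = 2) with hS2
  set Sne := Finset.univ.filter (fun j : ZMod J => ¬ j.val % 3 = 0) with hSne
  -- rewrite the inner product as minus a sum over S0
  have key : ⟪L96B a a, L96P a⟫ = - ∑ j ∈ S0, (L96B a a) j * a j := by
    have h0 : ⟪L96B a a, a⟫ = 0 := inner_L96B_self a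
    rw [my_inner_eq] at h0 ⊢
    have : ∑ j : ZMod J, (L96B a a) j * (L96P a) j
        = (∑ j : ZMod J, (L96B a a) j * a j)
          - ∑ j : ZMod J, (if j.val % 3 = 0 then (L96B a a) j * a j else 0) := by
      rw [← Finset.sum_sub_distrib]
      apply Finset.sum_congr rfl
      intro j _
      simp only [L96P, PiLp.toLp_apply]
      split_ifs <;> ring
    rw [this, h0, ← Finset.sum_filter, zero_sub, hS0]
  rw [key, abs_neg]
  -- bound each term
  have hterm : ∀ j ∈ S0, |(L96B a a) j * a j|
      ≤ ‖a‖ * ((a (j-1))^2 + ((a (j+1))^2 + (a (j-2))^2) / 2) := by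
    intro j _
    have hB : (L96B a a) j = -(a (j-1) * a (j+1) - a (j-2) * a (j-1)) := by
      simp only [L96B, PiLp.toLp_apply]; ring
    rw [hB]
    have h1 : |a j| ≤ ‖a‖ := my_abs_coord_le a j
    have habs : |(-(a (j-1) * a (j+1) - a (j-2) * a (j-1))) * a j|
        ≤ (|a (j-1)| * |a (j+1)| + |a (j-2)| * |a (j-1)|) * |a j| := by
      rw [abs_mul]
      apply mul_le_mul_of_nonneg_right _ (abs_nonneg _)
      rw [abs_neg]
      calc |a (j-1) * a (j+1) - a (j-2) * a (j-1)|
          ≤ |a (j-1) * a (j+1)| + |a (j-2) * a (j-1)| := abs_sub _ _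
        _ = |a (j-1)| * |a (j+1)| + |a (j-2)| * |a (j-1)| := by
            rw [abs_mul, abs_mul]
    refine le_trans habs ?_
    have hAM : |a (j-1)| * |a (j+1)| + |a (j-2)| * |a (j-1)|
        ≤ (a (j-1))^2 + ((a (j+1))^2 + (a (j-2))^2) / 2 := by
      nlinarith [sq_abs (a (j-1)), sq_abs (a (j+1)), sq_abs (a (j-2)),
        sq_nonneg (|a (j-1)| - |a (j+1)|), sq_nonneg (|a (j-2)| - |a (j-1)|)]
    calc (|a (j-1)| * |a (j+1)| + |a (j-2)| * |a (j-1)|) * |a j|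
        ≤ ((a (j-1))^2 + ((a (j+1))^2 + (a (j-2))^2) / 2) * |a j| := by
          apply mul_le_mul_of_nonneg_right hAM (abs_nonneg _)
      _ ≤ ((a (j-1))^2 + ((a (j+1))^2 + (a (j-2))^2) / 2) * ‖a‖ := by
          apply mul_le_mul_of_nonneg_left h1
          positivity
      _ = ‖a‖ * ((a (j-1))^2 + ((a (j+1))^2 + (a (j-2))^2) / 2) := by ring
  have hsumS : (∑ j ∈ S0, (a (j-1))^2) + ((∑ j ∈ S0, (a (j+1))^2)
      + (∑ j ∈ S0, (a (j-2))^2)) / 2 ≤ ‖L96P a‖^2 := by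
    have hm1 : ∑ j ∈ S0, (a (j-1))^2 ≤ ∑ k ∈ S2, (a k)^2 := by
      apply my_sum_inj_le a (fun j => j - 1) sub_left_injective
      intro j hj
      simp only [hS0, Finset.mem_filter] at hj
      simp only [hS2, Finset.mem_filter]
      exact ⟨Finset.mem_univ _, my_mod3_sub_one hJ3 j hj.2⟩
    have hp1 : ∑ j ∈ S0, (a (j+1))^2 ≤ ∑ k ∈ S1, (a k)^2 := by
      apply my_sum_inj_le a (fun j => j + 1) (add_left_injective 1)
      intro j hj
      simp only [hS0, Finset.mem_filter] at hj
      simp only [hS1, Finset.mem_filter]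
      exact ⟨Finset.mem_univ _, my_mod3_add_one hJ3 j hj.2⟩
    have hm2 : ∑ j ∈ S0, (a (j-2))^2 ≤ ∑ k ∈ S1, (a k)^2 := by
      apply my_sum_inj_le a (fun j => j - 2) sub_left_injective
      intro j hj
      simp only [hS0, Finset.mem_filter] at hj
      simp only [hS1, Finset.mem_filter]
      exact ⟨Finset.mem_univ _, my_mod3_sub_two hJ3 j hj.2⟩
    have hdisj : Disjoint S1 S2 := by
      rw [Finset.disjoint_filter]
      intro j _ h1 h2
      omega
    have hunion : ∑ k ∈ S1, (a k)^2 + ∑ k ∈ S2, (a k)^2 ≤ ‖L96P a‖^2 := by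
      rw [← Finset.sum_union hdisj, my_norm_P_sq]
      apply Finset.sum_le_sum_of_subset_of_nonneg
      · intro k hk
        rcases Finset.mem_union.mp hk with hk | hk <;>
          simp only [hS1, hS2, hSne, Finset.mem_filter] at hk ⊢ <;>
          exact ⟨Finset.mem_univ _, by omega⟩
      · intros; positivity
    linarith
  calc |∑ j ∈ S0, (L96B a a) j * a j|
      ≤ ∑ j ∈ S0, |(L96B a a) j * a j| := Finset.abs_sum_le_sum_abs _ _
    _ ≤ ∑ j ∈ S0, ‖a‖ * ((a (j-1))^2 + ((a (j+1))^2 + (a (j-2))^2) / 2) :=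
        Finset.sum_le_sum hterm
    _ = ‖a‖ * ((∑ j ∈ S0, (a (j-1))^2) + ((∑ j ∈ S0, (a (j+1))^2)
        + (∑ j ∈ S0, (a (j-2))^2)) / 2) := by
        rw [← Finset.mul_sum]
        congr 1
        rw [Finset.sum_add_distrib]
        congr 1
        rw [← Finset.sum_div, Finset.sum_add_distrib]
    _ ≤ ‖a‖ * ‖L96P a‖^2 := mul_le_mul_of_nonneg_left hsumS (norm_nonneg _)

lemma my_inner_P_eq_sum (x y : EuclideanSpace ℝ (ZMod J)) :
    ⟪L96P x, y⟫ = ∑ j ∈ Finset.univ.filter (fun j : ZMod J => ¬ j.val % 3 = 0),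
      x j * y j := by
  rw [my_inner_eq, Finset.sum_filter]
  apply Finset.sum_congr rfl
  intro j _
  simp only [L96P, PiLp.toLp_apply]
  split_ifs <;> simp

lemma my_hasDerivAt_sum_sq (S : Finset (ZMod J)) (δ : ℝ → EuclideanSpace ℝ (ZMod J))
    (Dv : EuclideanSpace ℝ (ZMod J)) (t : ℝ) (hδ : HasDerivAt δ Dv t) :
    HasDerivAt (fun s => ∑ j ∈ S, (δ s j)^2) (∑ j ∈ S, 2 * δ t j * Dv j) t := by
  apply HasDerivAt.fun_sum
  intro j _
  have hc : HasDerivAt (fun s => δ s j) (Dv j) t := by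
    have := (EuclideanSpace.proj (𝕜 := ℝ) j).hasFDerivAt.comp_hasDerivAt t hδ
    exact this
  have h2 := hc.pow 2
  exact h2.congr_deriv (by norm_num)

lemma my_antitone_aux {h : ℝ} {w w' : ℝ → ℝ}
    (hw : ∀ s ∈ Set.Icc (0:ℝ) h, HasDerivAt w (w' s) s)
    (hneg : ∀ s ∈ Set.Ioo (0:ℝ) h, w' s ≤ 0) :
    ∀ t ∈ Set.Icc (0:ℝ) h, w t ≤ w 0 := by
  intro t ht
  have hcont : ContinuousOn w (Set.Icc 0 h) :=
    fun s hs => (hw s hs).continuousAt.continuousWithinAt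
  have hdiff : DifferentiableOn ℝ w (interior (Set.Icc (0:ℝ) h)) := by
    rw [interior_Icc]
    exact fun s hs =>
      ((hw s (Set.Ioo_subset_Icc_self hs)).differentiableAt).differentiableWithinAt
  have hderiv : ∀ s ∈ interior (Set.Icc (0:ℝ) h), deriv w s ≤ 0 := by
    intro s hs
    rw [interior_Icc] at hs
    rw [(hw s (Set.Ioo_subset_Icc_self hs)).deriv]
    exact hneg s hs
  have hmem0 : (0:ℝ) ∈ Set.Icc (0:ℝ) h := ⟨le_refl 0, le_trans ht.1 ht.2⟩
  exact antitoneOn_of_deriv_nonpos (convex_Icc 0 h) hcont hdiff hderiv hmem0 ht ht.1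

lemma my_deriv_nonpos (E β yv q : ℝ) (hE : 0 < E) (hq : q ≤ β * yv) :
    E * (-β) * yv + E * q ≤ 0 := by
  nlinarith [mul_le_mul_of_nonneg_left hq hE.le]

lemma my_exp_cancel (A B ys y0 : ℝ) (hA : 0 < A) (h1 : B * ys ≤ y0)
    (hinv : A * B = 1) : ys ≤ A * y0 := by
  have h2 : A * (B * ys) = ys := by rw [← mul_assoc, hinv, one_mul]
  have h3 := mul_le_mul_of_nonneg_left h1 hA.le
  linarith

lemma my_arith_key1 (κ X Y Eh d : ℝ) (hκ0 : 0 ≤ κ) (hX2' : X^2 ≤ Eh^2*d^2) :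
    8*κ*(X*Y) ≤ 16*κ^2*Eh^2*d^2 + Y^2 := by
  nlinarith [sq_nonneg (4*κ*X - Y),
    mul_le_mul_of_nonneg_left hX2' (show (0:ℝ) ≤ 16*κ^2 by positivity)]

lemma my_arith_key2 (X Y Eh d R0 : ℝ) (hX0 : 0 ≤ X) (hY0 : 0 ≤ Y) (hYX : Y ≤ X)
    (hEh0 : 0 < Eh) (hd0 : 0 ≤ d) (hdR : d ≤ R0) (hXb : X ≤ Eh*d) :
    (2*X - 1)*Y^2 ≤ 4*R0^2*Eh^4*d^2 := by
  rcases le_or_gt X (1/2) with hXc | hXc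
  · have hnp : (2*X - 1)*Y^2 ≤ 0 :=
      mul_nonpos_of_nonpos_of_nonneg (by linarith) (sq_nonneg _)
    have : (0:ℝ) ≤ 4*R0^2*Eh^4*d^2 := by positivity
    linarith
  · have hEhd : 1/2 < Eh * d := lt_of_lt_of_le hXc hXb
    have c1 : (2*X - 1)*Y^2 ≤ 2*X*X^2 := by
      have hY2 : Y^2 ≤ X^2 := by nlinarith
      nlinarith [sq_nonneg Y, sq_nonneg X]
    have c2 : 2*X*X^2 ≤ 2*(Eh*d)^3 := by
      have := pow_le_pow_left₀ hX0 hXb 3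
      nlinarith
    have c3 : 2*(Eh*d)^3 ≤ 4*R0^2*Eh^4*d^2 := by
      have h1' : d^2 ≤ R0^2 := by nlinarith
      have hh1 := mul_le_mul_of_nonneg_left h1'
        (show (0:ℝ) ≤ 4*Eh^4*d^2 by positivity)
      have hB : (0:ℝ) ≤ (2*(Eh*d) - 1) * (Eh^3*d^3) :=
        mul_nonneg (by linarith) (by positivity)
      nlinarith [hh1, hB]
    linarith

lemma my_arith_final (κ X Y Eh d R0 I1 I2 : ℝ) (hκ0 : 0 ≤ κ)
    (habs1 : |I1| ≤ X*Y^2) (habs2 : |I2| ≤ Y*(2*X*κ))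
    (hX0 : 0 ≤ X) (hY0 : 0 ≤ Y) (hYX : Y ≤ X) (hEh0 : 0 < Eh)
    (hd0 : 0 ≤ d) (hdR : d ≤ R0) (hXb : X ≤ Eh*d) :
    2 * (-(Y^2) - (I1 + 2*I2)) ≤ (16*κ^2*Eh^2 + 4*R0^2*Eh^4)*d^2 := by
  have hX2' : X^2 ≤ Eh^2*d^2 := by nlinarith [pow_le_pow_left₀ hX0 hXb 2]
  have k1 := my_arith_key1 κ X Y Eh d hκ0 hX2'
  have k2 := my_arith_key2 X Y Eh d R0 hX0 hY0 hYX hEh0 hd0 hdR hXb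
  have ha1 := abs_le.mp habs1
  have ha2 := abs_le.mp habs2
  nlinarith [k1, k2, ha1.1, ha2.1]

set_option maxHeartbeats 2000000 in
/-- growth bound on the observed part of the error:
`|Pδ(t)|² ≤ A1(t)|δ(0)|² + |Pδ(0)|²` with
`A1(t) = (16K/β)(e^{βt} − 1) + (2R0²/β)(e^{2βt} − 1)`. -/
theorem l96_pdelta_growth {J J' : ℕ} [NeZero J] (hJ' : 1 ≤ J') (hJ : J = 3 * J')
    (F h K β R0 : ℝ) (hF : 0 < F)
    (hK : K = 2 * J * F ^ 2) (hβdef : β = 2 * (2 * Real.sqrt K - 1)) (hβ : 0 < β)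
    (u v : ℝ → EuclideanSpace ℝ (ZMod J))
    (hu : L96Sol F (Set.Icc 0 h) u) (hv : L96Sol F (Set.Icc 0 h) v)
    (hvK : ∀ t ∈ Set.Icc (0:ℝ) h, ‖v t‖ ^ 2 ≤ K)
    (hR0 : R0 = ‖u 0 - v 0‖ + ‖L96P (u 0 - v 0)‖) :
    ∀ t ∈ Set.Icc (0:ℝ) h,
      ‖L96P (u t - v t)‖ ^ 2 ≤
        ((16 * K / β) * (Real.exp (β * t) - 1)
            + (2 * R0 ^ 2 / β) * (Real.exp (2 * β * t) - 1)) * ‖u 0 - v 0‖ ^ 2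
          + ‖L96P (u 0 - v 0)‖ ^ 2 := by
  have hJ3 : (3:ℕ) ∣ J := ⟨J', hJ⟩
  intro t ht
  have ht0 : (0:ℝ) ≤ t := ht.1
  have hth : t ≤ h := ht.2
  have h0h : (0:ℝ) ≤ h := le_trans ht0 hth
  -- constants
  have hK0 : (0:ℝ) ≤ K := by rw [hK]; positivity
  set κ := Real.sqrt K with hκ
  have hκ0 : (0:ℝ) ≤ κ := Real.sqrt_nonneg K
  have hKκ : K = κ^2 := (Real.sq_sqrt hK0).symm
  have hβκ : β = 4*κ - 2 := by rw [hβdef]; ring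
  have hvκ : ∀ s ∈ Set.Icc (0:ℝ) h, ‖v s‖ ≤ κ := by
    intro s hs
    apply my_sq_le _ _ (norm_nonneg _) hκ0
    rw [← hKκ]; exact hvK s hs
  -- the error and its derivative
  set δ : ℝ → EuclideanSpace ℝ (ZMod J) := fun s => u s - v s with hδdef
  set D : ℝ → EuclideanSpace ℝ (ZMod J) :=
    fun s => -δ s - (L96B (δ s) (u s) + L96B (δ s) (v s)) with hDdef
  have hδD : ∀ s ∈ Set.Icc (0:ℝ) h, HasDerivAt δ (D s) s := by
    intro s hs
    have h1 := (hu s hs).sub (hv s hs)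
    have heq : (-u s - L96B (u s) (u s) + L96f F) - (-v s - L96B (v s) (v s) + L96f F)
        = D s := by
      have hB := L96B_sub_identity (u s) (v s)
      have h2 : (-u s - L96B (u s) (u s) + L96f F) - (-v s - L96B (v s) (v s) + L96f F)
          = -(u s - v s) - (L96B (u s) (u s) - L96B (v s) (v s)) := by abel
      rw [h2, hB]
    exact heq ▸ h1
  have hBsplit : ∀ s : ℝ, L96B (δ s) (u s) = L96B (δ s) (δ s) + L96B (δ s) (v s) := by
    intro s
    have husv : u s = δ s + v s := by simp [hδdef]
    conv_lhs => rw [husv]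
    exact L96B_add_right _ _ _
  -- the energy function
  set y : ℝ → ℝ := fun s => ∑ j, (δ s j)^2 with hydef
  have hynorm : ∀ s, y s = ‖δ s‖^2 := fun s => (my_norm_sq_eq (δ s)).symm
  have hyval : ∀ s : ℝ, (∑ j, 2 * δ s j * D s j) = 2 * ⟪δ s, D s⟫ := by
    intro s
    rw [my_inner_eq, Finset.mul_sum]
    exact Finset.sum_congr rfl (fun j _ => by ring)
  have hinnerD : ∀ s ∈ Set.Icc (0:ℝ) h, 2 * ⟪δ s, D s⟫ ≤ β * y s := by
    intro s hs
    have e : ⟪δ s, D s⟫ = -⟪δ s, δ s⟫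
        - (⟪δ s, L96B (δ s) (δ s)⟫ + 2*⟪δ s, L96B (δ s) (v s)⟫) := by
      simp only [hDdef]
      rw [hBsplit s, inner_sub_right, inner_neg_right, inner_add_right, inner_add_right]
      ring
    have h1 : ⟪δ s, L96B (δ s) (δ s)⟫ = 0 := by
      rw [real_inner_comm]; exact inner_L96B_self (δ s)
    have h2 : |⟪δ s, L96B (δ s) (v s)⟫| ≤ κ * ‖δ s‖^2 := by
      rw [real_inner_comm]
      refine le_trans (abs_inner_L96B_le (δ s) (v s)) ?_
      exact mul_le_mul_of_nonneg_right (hvκ s hs) (sq_nonneg _)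
    have h3 : ⟪δ s, δ s⟫ = ‖δ s‖^2 := real_inner_self_eq_norm_sq (δ s)
    rw [e, h1, h3, hynorm s, hβκ]
    have := abs_le.mp h2
    linarith
  -- Gronwall
  have energy : ∀ s ∈ Set.Icc (0:ℝ) h, ‖δ s‖^2 ≤ Real.exp (β*s) * ‖δ 0‖^2 := by
    have hz : ∀ s ∈ Set.Icc (0:ℝ) h, HasDerivAt (fun x => Real.exp (-β*x) * y x)
        (Real.exp (-β*s) * (-β) * y s + Real.exp (-β*s) * (∑ j, 2 * δ s j * D s j)) s := by
      intro s hs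
      have hlin : HasDerivAt (fun x : ℝ => -β * x) (-β) s := by
        simpa using (hasDerivAt_id s).const_mul (-β)
      have hexp : HasDerivAt (fun x : ℝ => Real.exp (-β*x)) (Real.exp (-β*s) * (-β)) s :=
        (Real.hasDerivAt_exp (-β*s)).comp s hlin
      exact hexp.mul (my_hasDerivAt_sum_sq Finset.univ δ (D s) s (hδD s hs))
    have hneg : ∀ s ∈ Set.Ioo (0:ℝ) h,
        Real.exp (-β*s) * (-β) * y s + Real.exp (-β*s) * (∑ j, 2 * δ s j * D s j) ≤ 0 := by
      intro s hs
      have hs' : s ∈ Set.Icc (0:ℝ) h := Set.Ioo_subset_Icc_self hs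
      rw [hyval s]
      exact my_deriv_nonpos _ β (y s) _ (Real.exp_pos (-β*s)) (hinnerD s hs')
    have hmono := my_antitone_aux hz hneg
    intro s hs
    have h1 := hmono s hs
    simp only [neg_mul, mul_zero, neg_zero, Real.exp_zero, one_mul] at h1
    have hinv : Real.exp (β*s) * Real.exp (-(β*s)) = 1 := by
      rw [← Real.exp_add]; norm_num
    rw [← hynorm 0, ← hynorm s]
    exact my_exp_cancel _ _ _ _ (Real.exp_pos (β*s)) h1 hinv
  -- the observed part
  set Sne := Finset.univ.filter (fun j : ZMod J => ¬ j.val % 3 = 0) with hSne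
  set g : ℝ → ℝ := fun s => ∑ j ∈ Sne, (δ s j)^2 with hgdef
  have hgnorm : ∀ s, g s = ‖L96P (δ s)‖^2 := fun s => (my_norm_P_sq (δ s)).symm
  set d := ‖δ 0‖ with hd
  have hd0 : (0:ℝ) ≤ d := norm_nonneg _
  have hdR : d ≤ R0 := by
    rw [hR0]
    have := norm_nonneg (L96P (u 0 - v 0))
    simp only [hδdef, hd]
    linarith
  have hR0nn : (0:ℝ) ≤ R0 := le_trans hd0 hdR
  -- derivative bound for g on the open interval
  have gbound : ∀ s ∈ Set.Ioo (0:ℝ) h, (∑ j ∈ Sne, 2 * δ s j * D s j)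
      ≤ (16*K*Real.exp (β*s) + 4*R0^2*Real.exp (2*β*s))*d^2 := by
    intro s hs
    have hs' : s ∈ Set.Icc (0:ℝ) h := Set.Ioo_subset_Icc_self hs
    have hs0 : (0:ℝ) ≤ s := le_of_lt hs.1
    have hsum : (∑ j ∈ Sne, 2 * δ s j * D s j) = 2 * ⟪L96P (δ s), D s⟫ := by
      rw [my_inner_P_eq_sum, Finset.mul_sum]
      exact Finset.sum_congr rfl (fun j _ => by ring)
    set X := ‖δ s‖ with hX
    set Y := ‖L96P (δ s)‖ with hY
    have hX0 : (0:ℝ) ≤ X := norm_nonneg _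
    have hY0 : (0:ℝ) ≤ Y := norm_nonneg _
    have hYX : Y ≤ X := my_norm_P_le (δ s)
    set Eh := Real.exp (β*s/2) with hEh
    have hEh0 : (0:ℝ) < Eh := Real.exp_pos _
    have hE1 : Real.exp (β*s) = Eh^2 := by
      rw [hEh, ← Real.exp_nat_mul]; congr 1; push_cast; ring
    have hE2 : Real.exp (2*β*s) = Eh^4 := by
      rw [hEh, ← Real.exp_nat_mul]; congr 1; push_cast; ring
    have hXb : X ≤ Eh * d := by
      have hX2 : X^2 ≤ Real.exp (β*s) * d^2 := energy s hs'
      apply my_sq_le _ _ hX0 (by positivity)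
      calc X^2 ≤ Real.exp (β*s) * d^2 := hX2
        _ = (Eh*d)^2 := by rw [hE1]; ring
    have e : ⟪L96P (δ s), D s⟫ = -⟪L96P (δ s), δ s⟫
        - (⟪L96P (δ s), L96B (δ s) (δ s)⟫ + 2*⟪L96P (δ s), L96B (δ s) (v s)⟫) := by
      simp only [hDdef]
      rw [hBsplit s, inner_sub_right, inner_neg_right, inner_add_right, inner_add_right]
      ring
    have hPδ : ⟪L96P (δ s), δ s⟫ = Y^2 := by
      rw [my_inner_P]; exact real_inner_self_eq_norm_sq _
    have h1 : |⟪L96P (δ s), L96B (δ s) (δ s)⟫| ≤ X * Y^2 := by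
      rw [real_inner_comm]; exact abs_inner_L96B_P hJ3 (δ s)
    have h2 : |⟪L96P (δ s), L96B (δ s) (v s)⟫| ≤ Y * (2*X*κ) := by
      calc |⟪L96P (δ s), L96B (δ s) (v s)⟫|
          ≤ ‖L96P (δ s)‖ * ‖L96B (δ s) (v s)‖ := abs_real_inner_le_norm _ _
        _ ≤ Y * (2*X*κ) := by
            apply mul_le_mul_of_nonneg_left _ hY0
            calc ‖L96B (δ s) (v s)‖ ≤ 2 * ‖δ s‖ * ‖v s‖ := norm_L96B_le _ _
              _ ≤ 2*X*κ := by
                  apply mul_le_mul_of_nonneg_left (hvκ s hs')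
                  positivity
    rw [hsum, e, hPδ, hKκ, hE1, hE2]
    exact my_arith_final κ X Y Eh d R0 _ _ hκ0 h1 h2 hX0 hY0 hYX hEh0 hd0 hdR hXb
  -- comparison function
  set A1 : ℝ → ℝ := fun s => (16*K/β)*(Real.exp (β*s) - 1)
    + (2*R0^2/β)*(Real.exp (2*β*s) - 1) with hA1
  have hA1d : ∀ s : ℝ, HasDerivAt (fun x => A1 x * d^2)
      ((16*K*Real.exp (β*s) + 4*R0^2*Real.exp (2*β*s))*d^2) s := by
    intro s
    have hb1 : HasDerivAt (fun x : ℝ => β * x) β s := by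
      simpa using (hasDerivAt_id s).const_mul β
    have he1 : HasDerivAt (fun x : ℝ => Real.exp (β*x)) (Real.exp (β*s) * β) s :=
      (Real.hasDerivAt_exp (β*s)).comp s hb1
    have hb2 : HasDerivAt (fun x : ℝ => 2*β * x) (2*β) s := by
      simpa using (hasDerivAt_id s).const_mul (2*β)
    have he2 : HasDerivAt (fun x : ℝ => Real.exp (2*β*x)) (Real.exp (2*β*s) * (2*β)) s :=
      (Real.hasDerivAt_exp (2*β*s)).comp s hb2
    have hcomb := (((he1.sub_const 1).const_mul (16*K/β)).add
      ((he2.sub_const 1).const_mul (2*R0^2/β))).mul_const (d^2)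
    refine hcomb.congr_deriv ?_
    have hβne : β ≠ 0 := ne_of_gt hβ
    field_simp
    ring
  have hwD : ∀ s ∈ Set.Icc (0:ℝ) h, HasDerivAt (fun x => g x - A1 x * d^2)
      ((∑ j ∈ Sne, 2 * δ s j * D s j)
        - (16*K*Real.exp (β*s) + 4*R0^2*Real.exp (2*β*s))*d^2) s :=
    fun s hs => (my_hasDerivAt_sum_sq Sne δ (D s) s (hδD s hs)).sub (hA1d s)
  have hwneg : ∀ s ∈ Set.Ioo (0:ℝ) h, (∑ j ∈ Sne, 2 * δ s j * D s j)
      - (16*K*Real.exp (β*s) + 4*R0^2*Real.exp (2*β*s))*d^2 ≤ 0 := by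
    intro s hs
    have := gbound s hs
    linarith
  have hfinal := my_antitone_aux hwD hwneg t ht
  have hA10 : A1 0 = 0 := by simp [hA1]
  have hgoal1 : ‖L96P (u t - v t)‖^2 = g t := by rw [hgnorm t]
  have hgoal2 : ‖L96P (u 0 - v 0)‖^2 = g 0 := by rw [hgnorm 0]
  rw [hgoal1, hgoal2]
  show g t ≤ A1 t * d^2 + g 0
  have hfin : g t - A1 t * d^2 ≤ g 0 - A1 0 * d^2 := hfinal
  rw [hA10] at hfin
  linarith
end
end

section
/- (Accuracy of discrete 3DVAR with bounded noise.) Let F > 0, K = 2JF², and β = 2(2√K − 1) with β > 0, and define the norm ‖z‖ = |z| + |Pz| on ℝ^J. For every R0 > 0 there exist h > 0, η > 0, α ∈ (0,1) and ε0 > 0 with the following property. Let v be a solution of the Lorenz '96 equation on [0,∞) with |v(t)|² ≤ K for all t ≥ 0, let 0 < ε ≤ ε0, let (ν_k)_{k≥1} be a sequence in ℝ^J with ν_k = Pν_k and |ν_k| ≤ ε for all k, and let (m_k)_{k≥0} be a sequence in ℝ^J with ‖m_0 − v(0)‖ ≤ R0 satisfying the 3DVAR recursion m_{k+1} = (η/(1+η))·P·u_k(h)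 + Q·u_k(h) + (1/(1+η))·(P·v((k+1)h) + ν_{k+1}), where for each k the function u_k : [0,h] → ℝ^J is a solution of the Lorenz '96 equation with u_k(0) = m_k. Then for all k ≥ 0, ‖m_{k+1} − v((k+1)h)‖ ≤ α·‖m_k − v(kh)‖ + 2ε, and consequently limsup_{k→∞} ‖m_k − v(kh)‖ ≤ 2ε/(1−α). -/
open scoped RealInnerProductSpace

noncomputable section

variable {J : ℕ} [NeZero J]

local notation "E" => EuclideanSpace ℝ (ZMod J)

lemma sum_shift (c : ZMod J) (g : ZMod J → ℝ) : ∑ j, g (j + c) = ∑ j, g j :=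
  Fintype.sum_equiv (Equiv.addRight c) _ _ (fun _ => rfl)

lemma sum_shift' (c : ZMod J) (g : ZMod J → ℝ) : ∑ j, g (j - c) = ∑ j, g j :=
  Fintype.sum_equiv (Equiv.subRight c) _ _ (fun _ => rfl)

lemma normsq (x : E) : ‖x‖^2 = ∑ j, (x j)^2 := by
  rw [EuclideanSpace.norm_eq, Real.sq_sqrt (by positivity)]
  simp [sq_abs]

lemma inner_eq (x y : E) : ⟪x, y⟫ = ∑ j, x j * y j := by
  simp [PiLp.inner_apply, RCLike.inner_apply, starRingEnd_apply, mul_comm]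

lemma coord_sq_le (x : E) (j : ZMod J) : (x j)^2 ≤ ‖x‖^2 := by
  rw [normsq]
  exact Finset.single_le_sum (f := fun j => (x j)^2) (fun i _ => sq_nonneg _) (Finset.mem_univ j)

lemma L96B_symm (u w : E) : L96B u w = L96B w u := by
  ext j; simp only [L96B, PiLp.toLp_apply]; ring

lemma L96B_sub_sub (u v : E) : L96B u u - L96B v v = L96B (u - v) (u + v) := by
  ext j
  simp only [L96B, PiLp.sub_apply, PiLp.add_apply, PiLp.toLp_apply]
  ring

lemma inner_L96B_self_s17 (u : E) : ⟪L96B u u, u⟫ = 0 := by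
  rw [inner_eq]
  have h1 : ∑ j, (L96B u u) j * u j
      = (∑ j : ZMod J, u (j-2) * u (j-1) * u j) - (∑ j : ZMod J, u (j-1) * u j * u (j+1)) := by
    rw [← Finset.sum_sub_distrib]
    congr 1; funext j; simp only [L96B, PiLp.toLp_apply]; ring
  rw [h1]
  have h2 : ∑ j : ZMod J, u (j-2) * u (j-1) * u j
      = ∑ j : ZMod J, u (j-1) * u j * u (j+1) := by
    have := sum_shift (J := J) 1 (fun j => u (j-2) * u (j-1) * u j)
    rw [← this]
    congr 1; funext j
    have e1 : j + 1 - 2 = j - 1 := by ring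
    have e2 : j + 1 - 1 = j := by ring
    rw [e1, e2]
  rw [h2, sub_self]

lemma norm_L96B_le_s17 (u w : E) : ‖L96B u w‖ ≤ 2 * ‖u‖ * ‖w‖ := by
  have hsq : ‖L96B u w‖^2 ≤ (2 * ‖u‖ * ‖w‖)^2 := by
    rw [normsq]
    have key : ∀ j : ZMod J, (L96B u w j)^2 ≤
        ‖u‖^2 * ((w (j-1))^2 + (w (j+1))^2 + (w (j-2))^2 + (w (j-1))^2) := by
      intro j
      have b1 := coord_sq_le u (j+1)
      have b2 := coord_sq_le u (j-1)
      have b3 := coord_sq_le u (j-2)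
      set t1 := w (j-1) * u (j+1) with ht1
      set t2 := u (j-1) * w (j+1) with ht2
      set t3 := w (j-2) * u (j-1) with ht3
      set t4 := u (j-2) * w (j-1) with ht4
      have e1 : (L96B u w j)^2 ≤ t1^2 + t2^2 + t3^2 + t4^2 := by
        have : L96B u w j = -(1/2) * (t1 + t2 - t3 - t4) := rfl
        rw [this]
        nlinarith [sq_nonneg (t1 - t2), sq_nonneg (t3 - t4), sq_nonneg (t1 + t2 + t3 + t4),
          sq_nonneg t1, sq_nonneg t2, sq_nonneg t3, sq_nonneg t4]
      have e2 : t1^2 + t2^2 + t3^2 + t4^2 ≤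
          ‖u‖^2 * ((w (j-1))^2 + (w (j+1))^2 + (w (j-2))^2 + (w (j-1))^2) := by
        have m1 : t1^2 = (w (j-1))^2 * (u (j+1))^2 := by rw [ht1]; ring
        have m2 : t2^2 = (w (j+1))^2 * (u (j-1))^2 := by rw [ht2]; ring
        have m3 : t3^2 = (w (j-2))^2 * (u (j-1))^2 := by rw [ht3]; ring
        have m4 : t4^2 = (w (j-1))^2 * (u (j-2))^2 := by rw [ht4]; ring
        rw [m1, m2, m3, m4]
        nlinarith [mul_le_mul_of_nonneg_left b1 (sq_nonneg (w (j-1))),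
          mul_le_mul_of_nonneg_left b2 (sq_nonneg (w (j+1))),
          mul_le_mul_of_nonneg_left b2 (sq_nonneg (w (j-2))),
          mul_le_mul_of_nonneg_left b3 (sq_nonneg (w (j-1)))]
      exact e1.trans e2
    calc ∑ j, (L96B u w j)^2
        ≤ ∑ j : ZMod J, ‖u‖^2 * ((w (j-1))^2 + (w (j+1))^2 + (w (j-2))^2 + (w (j-1))^2) :=
          Finset.sum_le_sum (fun j _ => key j)
      _ = ‖u‖^2 * (∑ j : ZMod J, ((w (j-1))^2 + (w (j+1))^2 + (w (j-2))^2 + (w (j-1))^2)) := by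
          rw [Finset.mul_sum]
      _ = ‖u‖^2 * (4 * ‖w‖^2) := by
          rw [normsq]
          congr 1
          rw [Finset.sum_add_distrib, Finset.sum_add_distrib, Finset.sum_add_distrib]
          have s1 := sum_shift' (J := J) 1 (fun j => (w j)^2)
          have s2 := sum_shift (J := J) 1 (fun j => (w j)^2)
          have s3 := sum_shift' (J := J) 2 (fun j => (w j)^2)
          rw [s1, s2, s3, ← normsq w]; ring
      _ = (2 * ‖u‖ * ‖w‖)^2 := by ring
  have h2 : (0:ℝ) ≤ 2 * ‖u‖ * ‖w‖ := by positivity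
  nlinarith [norm_nonneg (L96B u w)]

lemma L96Q_apply (x : E) (j : ZMod J) :
    L96Q x j = if j.val % 3 = 0 then x j else 0 := by
  simp only [L96Q, L96P, PiLp.sub_apply, PiLp.toLp_apply]
  split <;> simp

lemma L96P_add (x y : E) : L96P (x + y) = L96P x + L96P y := by
  ext j; simp only [L96P, PiLp.add_apply, PiLp.toLp_apply]; split <;> simp

lemma L96P_smul (c : ℝ) (x : E) : L96P (c • x) = c • L96P x := by
  ext j; simp only [L96P, PiLp.smul_apply, smul_eq_mul, PiLp.toLp_apply]; split <;> simp

lemma L96P_sub (x y : E) : L96P (x - y) = L96P x - L96P y := by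
  ext j; simp only [L96P, PiLp.sub_apply, PiLp.toLp_apply]; split <;> simp

lemma L96P_idem (x : E) : L96P (L96P x) = L96P x := by
  ext j; simp only [L96P, PiLp.toLp_apply]; split <;> simp_all

lemma L96P_L96Q (x : E) : L96P (L96Q x) = 0 := by
  ext j
  simp only [L96P, L96Q_apply, PiLp.toLp_apply]
  split <;> simp_all

lemma L96P_add_L96Q (x : E) : L96P x + L96Q x = x := by
  simp [L96Q]

lemma val_mod3_iff (h3 : 3 ∣ J) (j : ZMod J) :
    j.val % 3 = 0 ↔ (ZMod.castHom h3 (ZMod 3)) j = 0 := by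
  rw [ZMod.castHom_apply, ← ZMod.natCast_val]
  rw [ZMod.natCast_eq_zero_iff]
  exact Nat.dvd_iff_mod_eq_zero.symm

lemma shift_not_mod3 (h3 : 3 ∣ J) (j : ZMod J) (hj : j.val % 3 = 0) :
    (j + 1).val % 3 ≠ 0 ∧ (j - 1).val % 3 ≠ 0 ∧ (j - 2).val % 3 ≠ 0 := by
  set φ := ZMod.castHom h3 (ZMod 3) with hφ
  have h0 : φ j = 0 := (val_mod3_iff h3 j).1 hj
  have h2 : φ 2 = 2 := by
    rw [show (2 : ZMod J) = ((2:ℕ) : ZMod J) by norm_num, map_natCast]; norm_num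
  refine ⟨fun hc => ?_, fun hc => ?_, fun hc => ?_⟩ <;>
    [skip; skip; skip]
  · have := (val_mod3_iff h3 _).1 hc
    rw [map_add, h0, map_one] at this
    exact (by decide : (1:ZMod 3) ≠ 0) this
  · have := (val_mod3_iff h3 _).1 hc
    rw [map_sub, h0, map_one] at this
    exact (by decide : (0:ZMod 3) - 1 ≠ 0) this
  · have := (val_mod3_iff h3 _).1 hc
    rw [map_sub, h0, h2] at this
    exact (by decide : (0:ZMod 3) - 2 ≠ 0) this

lemma norm_L96P_le (x : E) : ‖L96P x‖ ≤ ‖x‖ := by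
  rw [EuclideanSpace.norm_eq, EuclideanSpace.norm_eq]
  apply Real.sqrt_le_sqrt
  apply Finset.sum_le_sum
  intro j _
  simp only [L96P, PiLp.toLp_apply]
  split <;> simp [sq_nonneg, sq_abs]

lemma norm_L96Q_le (x : E) : ‖L96Q x‖ ≤ ‖x‖ := by
  rw [EuclideanSpace.norm_eq, EuclideanSpace.norm_eq]
  apply Real.sqrt_le_sqrt
  apply Finset.sum_le_sum
  intro j _
  rw [L96Q_apply]
  split <;> simp [sq_nonneg, sq_abs]

lemma norm_le_P_add_Q (x : E) : ‖x‖ ≤ ‖L96P x‖ + ‖L96Q x‖ := by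
  calc ‖x‖ = ‖L96P x + L96Q x‖ := by rw [L96P_add_L96Q]
    _ ≤ _ := norm_add_le _ _

lemma L96Q_L96B (h3 : 3 ∣ J) (u w : E) :
    L96Q (L96B u w) = L96Q (L96B (L96P u) (L96P w)) := by
  ext j
  rw [L96Q_apply, L96Q_apply]
  split
  case isTrue hj =>
    obtain ⟨n1, n2, n3⟩ := shift_not_mod3 h3 j hj
    simp only [L96B, L96P, PiLp.toLp_apply, if_neg n1, if_neg n2, if_neg n3]
  case isFalse => rfl

lemma norm_L96Q_L96B_le (h3 : 3 ∣ J) (u w : E) :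
    ‖L96Q (L96B u w)‖ ≤ 2 * ‖L96P u‖ * ‖L96P w‖ := by
  rw [L96Q_L96B h3]
  exact (norm_L96Q_le _).trans (norm_L96B_le_s17 _ _)

def L96Plm : E →ₗ[ℝ] E where
  toFun := L96P
  map_add' := L96P_add
  map_smul' := L96P_smul

def L96Pclm : E →L[ℝ] E := LinearMap.toContinuousLinearMap L96Plm

lemma L96Pclm_apply (x : E) : L96Pclm x = L96P x := rfl

lemma HasDerivAt.l96P {w : ℝ → E} {w' : E} {t : ℝ} (hw : HasDerivAt w w' t) :
    HasDerivAt (fun s => L96P (w s)) (L96P w') t := by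
  have := (L96Pclm.hasFDerivAt (x := w t)).comp_hasDerivAt t hw
  exact this

lemma HasDerivAt.l96Q {w : ℝ → E} {w' : E} {t : ℝ} (hw : HasDerivAt w w' t) :
    HasDerivAt (fun s => L96Q (w s)) (L96Q w') t := by
  exact hw.sub hw.l96P

lemma gronwall_real {f f' : ℝ → ℝ} {δ K ε b : ℝ}
    (hf : ∀ x ∈ Set.Icc 0 b, HasDerivAt f (f' x) x)
    (ha : f 0 ≤ δ) (bound : ∀ x ∈ Set.Icc 0 b, f' x ≤ K * f x + ε) :
    ∀ x ∈ Set.Icc 0 b, f x ≤ gronwallBound δ K ε x := by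
  intro x hx
  have main := le_gronwallBound_of_liminf_deriv_right_le (f := f) (f' := f') (a := 0) (b := b)
    (δ := δ) (K := K) (ε := ε)
    (fun t ht => (hf t ht).continuousAt.continuousWithinAt)
    (fun t ht r hr => by
      have h1 := ((hf t ⟨ht.1, ht.2.le⟩).hasDerivWithinAt (s := Set.Ici t)).liminf_right_slope_le hr
      apply h1.mono
      intro z hz
      rwa [slope_def_field, div_eq_inv_mul] at hz)
    ha (fun t ht => bound t ⟨ht.1, ht.2.le⟩) x hx
  simpa using main

lemma gronwallBound_neg_one (δ ε s : ℝ) :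
    gronwallBound δ (-1) ε s = δ * Real.exp (-s) + ε * (1 - Real.exp (-s)) := by
  rw [gronwallBound_of_K_ne_0 (by norm_num : (-1:ℝ) ≠ 0)]
  show δ * Real.exp (-1 * s) + ε / (-1) * (Real.exp (-1 * s) - 1) = _
  rw [show (-1 : ℝ) * s = -s by ring]
  ring

lemma sqrt_add_le' {x y : ℝ} (hx : 0 ≤ x) (hy : 0 ≤ y) :
    Real.sqrt (x + y) ≤ Real.sqrt x + Real.sqrt y := by
  have h1 : x + y ≤ (Real.sqrt x + Real.sqrt y)^2 := by
    have := Real.sq_sqrt hx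
    have := Real.sq_sqrt hy
    nlinarith [Real.sqrt_nonneg x, Real.sqrt_nonneg y]
  calc Real.sqrt (x + y) ≤ Real.sqrt ((Real.sqrt x + Real.sqrt y)^2) := Real.sqrt_le_sqrt h1
    _ = _ := Real.sqrt_sq (by positivity)

lemma hasDerivAt_norm_sq' {w : ℝ → E} {w' : E} {t : ℝ} (hw : HasDerivAt w w' t) :
    HasDerivAt (fun s => ‖w s‖^2) (2 * ⟪w t, w'⟫) t := by
  have h1 := HasDerivAt.inner ℝ hw hw
  have h2 : (fun s => ‖w s‖^2) = fun s => ⟪w s, w s⟫ :=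
    funext fun s => (real_inner_self_eq_norm_sq _).symm
  rw [h2]
  refine h1.congr_deriv ?_
  rw [real_inner_comm]; ring

lemma norm_L96f_sq (F : ℝ) : ‖(L96f F : E)‖^2 = J * F^2 := by
  rw [normsq]
  simp [L96f, Finset.card_univ, ZMod.card]

lemma sol_norm_le {F h M : ℝ} {u : ℝ → E} (hu : L96Sol F (Set.Icc 0 h) u)
    (h0 : ‖u 0‖ ≤ M) (hfM : ‖(L96f F : E)‖ ≤ M) :
    ∀ s ∈ Set.Icc 0 h, ‖u s‖ ≤ M := by
  have hM : 0 ≤ M := le_trans (norm_nonneg _) h0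
  have key : ∀ s ∈ Set.Icc 0 h, ‖u s‖^2 ≤ gronwallBound (M^2) (-1) (M^2) s := by
    apply gronwall_real
      (f' := fun s => 2 * ⟪u s, -u s - L96B (u s) (u s) + L96f F⟫)
    · exact fun s hs => hasDerivAt_norm_sq' (hu s hs)
    · nlinarith [norm_nonneg (u 0)]
    · intro s _
      have hinner : ⟪u s, -u s - L96B (u s) (u s) + L96f F⟫
          = -‖u s‖^2 + ⟪u s, (L96f F : E)⟫ := by
        have hz : ⟪u s, L96B (u s) (u s)⟫ = (0:ℝ) := by
          rw [real_inner_comm]; exact inner_L96B_self_s17 _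
        rw [inner_add_right, inner_sub_right, inner_neg_right, real_inner_self_eq_norm_sq, hz]
        ring
      have hb : ⟪u s, (L96f F : E)⟫ ≤ ‖u s‖ * M := by
        refine le_trans (real_inner_le_norm _ _) ?_
        exact mul_le_mul_of_nonneg_left hfM (norm_nonneg _)
      rw [hinner]
      nlinarith [norm_nonneg (u s), sq_nonneg (‖u s‖ - M)]
  intro s hs
  have h1 := key s hs
  rw [gronwallBound_neg_one] at h1
  have h2 : ‖u s‖^2 ≤ M^2 := by nlinarith
  nlinarith [norm_nonneg (u s)]

lemma L96Q_lin (a b : E) (c : ℝ) : L96Q (-a - c • b) = -(L96Q a) - c • L96Q b := by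
  ext j
  simp only [L96Q_apply, PiLp.sub_apply, PiLp.neg_apply, PiLp.smul_apply, smul_eq_mul]
  split <;> simp <;> ring

lemma key_contraction (h3 : 3 ∣ J) {F M h : ℝ} (hM : 1 ≤ M) (hh : 0 < h)
    {u v : ℝ → E} (hu : L96Sol F (Set.Icc 0 h) u) (hv : L96Sol F (Set.Icc 0 h) v)
    (hub : ∀ s ∈ Set.Icc 0 h, ‖u s‖ ≤ M) (hvb : ∀ s ∈ Set.Icc 0 h, ‖v s‖ ≤ M) :
    ‖L96P (u h - v h)‖
        ≤ ‖L96P (u 0 - v 0)‖ + ((1+4*M) * Real.exp ((1+4*M)*h) * ‖u 0 - v 0‖) * h ∧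
    ‖L96Q (u h - v h)‖^2 ≤ Real.exp (-h) * ‖L96Q (u 0 - v 0)‖^2
      + 16*M^2 * (‖L96P (u 0 - v 0)‖ + ((1+4*M) * Real.exp ((1+4*M)*h) * ‖u 0 - v 0‖) * h)^2
        * (1 - Real.exp (-h)) := by
  set w : ℝ → E := fun s => u s - v s with hwdef
  set L : ℝ := 1 + 4*M with hLdef
  have hL : 0 < L := by nlinarith
  set D : ℝ → E := fun s => -(w s) - L96B (w s) (u s + v s) with hDdef
  have hw : ∀ s ∈ Set.Icc 0 h, HasDerivAt w (D s) s := by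
    intro s hs
    have h1 := (hu s hs).sub (hv s hs)
    refine h1.congr_deriv ?_
    rw [hDdef]
    simp only
    rw [hwdef]
    simp only
    rw [← L96B_sub_sub]
    abel
  have hDnorm : ∀ s ∈ Set.Icc 0 h, ‖D s‖ ≤ L * ‖w s‖ := by
    intro s hs
    have h1 : ‖D s‖ ≤ ‖w s‖ + ‖L96B (w s) (u s + v s)‖ := by
      rw [hDdef]; simp only
      refine le_trans (norm_sub_le _ _) ?_
      rw [norm_neg]
    have h2 : ‖L96B (w s) (u s + v s)‖ ≤ 2 * ‖w s‖ * (2*M) := by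
      refine le_trans (norm_L96B_le_s17 _ _) ?_
      have h3 : ‖u s + v s‖ ≤ 2*M := by
        refine le_trans (norm_add_le _ _) ?_
        linarith [hub s hs, hvb s hs]
      have := norm_nonneg (w s)
      nlinarith
    rw [hLdef]
    nlinarith [norm_nonneg (w s)]
  -- growth of w
  have hgrow : ∀ s ∈ Set.Icc 0 h, ‖w s‖ ≤ ‖w 0‖ * Real.exp (L * s) := by
    intro s hs
    have h1 := norm_le_gronwallBound_of_norm_deriv_right_le (f := w) (f' := D)
      (δ := ‖w 0‖) (K := L) (ε := 0) (a := 0) (b := h)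
      (fun t ht => (hw t ht).continuousAt.continuousWithinAt)
      (fun t ht => (hw t ⟨ht.1, ht.2.le⟩).hasDerivWithinAt)
      le_rfl
      (fun t ht => by simpa using hDnorm t ⟨ht.1, ht.2.le⟩)
      s hs
    rwa [gronwallBound_ε0, sub_zero] at h1
  have hw0 : (0:ℝ) ≤ ‖w 0‖ := norm_nonneg _
  have hexp_mono : ∀ s ∈ Set.Icc 0 h, Real.exp (L * s) ≤ Real.exp (L * h) := by
    intro s hs
    exact Real.exp_le_exp.2 (by nlinarith [hs.2])
  have hgrow' : ∀ s ∈ Set.Icc 0 h, ‖w s‖ ≤ ‖w 0‖ * Real.exp (L * h) := by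
    intro s hs
    exact le_trans (hgrow s hs) (by nlinarith [hexp_mono s hs])
  set C : ℝ := L * Real.exp (L*h) * ‖w 0‖ with hCdef
  have hC0 : 0 ≤ C := by positivity
  -- P part estimate
  have hP : ∀ s ∈ Set.Icc 0 h, ‖L96P (w s)‖ ≤ ‖L96P (w 0)‖ + C * s := by
    intro s hs
    have h1 := Convex.norm_image_sub_le_of_norm_hasDerivWithin_le
      (f := fun s => L96P (w s)) (f' := fun s => L96P (D s)) (s := Set.Icc 0 h) (C := C)
      (fun t ht => (hw t ht).l96P.hasDerivWithinAt)
      (fun t ht => by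
        refine le_trans (norm_L96P_le _) ?_
        refine le_trans (hDnorm t ht) ?_
        rw [hCdef]
        have := hgrow' t ht
        nlinarith [Real.exp_pos (L*h)])
      (convex_Icc 0 h) (Set.left_mem_Icc.2 hh.le) hs
    have h2 : ‖L96P (w s)‖ - ‖L96P (w 0)‖ ≤ ‖L96P (w s) - L96P (w 0)‖ :=
      norm_sub_norm_le _ _
    have h3 : ‖s - (0:ℝ)‖ = s := by
      rw [sub_zero, Real.norm_eq_abs, abs_of_nonneg hs.1]
    rw [h3] at h1
    linarith
  set S : ℝ := ‖L96P (w 0)‖ + C * h with hSdef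
  have hS0 : 0 ≤ S := by positivity
  have hPS : ∀ s ∈ Set.Icc 0 h, ‖L96P (w s)‖ ≤ S := by
    intro s hs
    refine le_trans (hP s hs) ?_
    rw [hSdef]
    nlinarith [hs.2]
  -- Q part energy estimate
  have hq : ∀ s ∈ Set.Icc 0 h, ‖L96Q (w h)‖^2
      ≤ Real.exp (-h) * ‖L96Q (w 0)‖^2 + 16*M^2*S^2 * (1 - Real.exp (-h)) := by
    intro s _
    have hgr := gronwall_real (f := fun s => ‖L96Q (w s)‖^2)
      (f' := fun s => 2 * ⟪L96Q (w s), L96Q (D s)⟫)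
      (δ := ‖L96Q (w 0)‖^2) (K := -1) (ε := 16*M^2*S^2) (b := h)
      (fun t ht => hasDerivAt_norm_sq' (hw t ht).l96Q)
      le_rfl
      ?_ h ⟨hh.le, le_rfl⟩
    · rw [gronwallBound_neg_one] at hgr
      ring_nf at hgr ⊢
      linarith
    · intro t ht
      have hQD : L96Q (D t) = -(L96Q (w t)) - L96Q (L96B (w t) (u t + v t)) := by
        rw [hDdef]
        have := L96Q_lin (w t) (L96B (w t) (u t + v t)) 1
        simpa using this
      have hQB : ‖L96Q (L96B (w t) (u t + v t))‖ ≤ 4 * M * S := by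
        refine le_trans (norm_L96Q_L96B_le h3 _ _) ?_
        have b1 : ‖L96P (w t)‖ ≤ S := hPS t ht
        have b2 : ‖L96P (u t + v t)‖ ≤ 2*M := by
          refine le_trans (norm_L96P_le _) (le_trans (norm_add_le _ _) ?_)
          linarith [hub t ht, hvb t ht]
        nlinarith [norm_nonneg (L96P (w t)), norm_nonneg (L96P (u t + v t))]
      have hip : ⟪L96Q (w t), L96Q (D t)⟫
          = -‖L96Q (w t)‖^2 - ⟪L96Q (w t), L96Q (L96B (w t) (u t + v t))⟫ := by
        rw [hQD, inner_sub_right, inner_neg_right, real_inner_self_eq_norm_sq]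
      have hcs : ⟪L96Q (w t), L96Q (L96B (w t) (u t + v t))⟫ ≥ -(‖L96Q (w t)‖ * (4*M*S)) := by
        have := real_inner_le_norm (L96Q (w t)) (-(L96Q (L96B (w t) (u t + v t))))
        rw [inner_neg_right, norm_neg] at this
        have h5 : ‖L96Q (w t)‖ * ‖L96Q (L96B (w t) (u t + v t))‖ ≤ ‖L96Q (w t)‖ * (4*M*S) :=
          mul_le_mul_of_nonneg_left hQB (norm_nonneg _)
        linarith
      show 2 * ⟪L96Q (w t), L96Q (D t)⟫ ≤ -1 * ‖L96Q (w t)‖^2 + 16*M^2*S^2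
      rw [hip]
      nlinarith [sq_nonneg (‖L96Q (w t)‖ - 4*M*S), norm_nonneg (L96Q (w t)), sq_nonneg (‖L96Q (w t)‖)]
  constructor
  · exact hP h ⟨hh.le, le_rfl⟩
  · have := hq h ⟨hh.le, le_rfl⟩
    rw [hSdef, hCdef] at this
    exact this

lemma sol_shift {F : ℝ} {v : ℝ → E} (hv : L96Sol F (Set.Ici 0) v) {t0 h : ℝ} (ht0 : 0 ≤ t0) :
    L96Sol F (Set.Icc 0 h) (fun s => v (t0 + s)) := by
  intro s hs
  have h1 : (0:ℝ) ≤ t0 + s := by linarith [hs.1]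
  have h2 := hv (t0 + s) h1
  have h3 : HasDerivAt (fun s : ℝ => t0 + s) 1 s := by
    simpa using (hasDerivAt_id s).const_add t0
  have h4 := h2.scomp s h3
  simp at h4; exact h4

lemma exp_neg_half_le {h : ℝ} (h0 : 0 ≤ h) (h1 : h ≤ 2) :
    Real.exp (-(h/2)) ≤ 1 - h/4 := by
  have he := Real.add_one_le_exp (h/2)
  have hp : (0:ℝ) < 1 + h/2 := by linarith
  have h2 : (Real.exp (h/2))⁻¹ ≤ (1 + h/2)⁻¹ := by
    apply inv_anti₀ hp
    linarith
  have h3 : (1 + h/2)⁻¹ ≤ 1 - h/4 := by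
    rw [inv_le_iff_one_le_mul₀ hp]
    nlinarith
  rw [Real.exp_neg]
  linarith

lemma one_sub_exp_neg_le {h : ℝ} : 1 - Real.exp (-h) ≤ h := by
  have := Real.add_one_le_exp (-h)
  linarith

lemma exp_neg_nonneg_le_one {h : ℝ} (h0 : 0 ≤ h) : Real.exp (-h) ≤ 1 := by
  rw [← Real.exp_zero]
  exact Real.exp_le_exp.2 (by linarith)

lemma L96Q_eq (x : E) : L96Q x = x - L96P x := rfl

set_option maxHeartbeats 2000000 in
lemma onestep (h3 : 3 ∣ J) {F M h η ε : ℝ} (hM : 1 ≤ M) (hh : 0 < h) (hh1 : h ≤ 1)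
    (hη : 0 < η)
    (hsmall : 4*M*Real.sqrt (1 - Real.exp (-h)) + 2*η ≤ 1/(48*(1+4*M)))
    (hC2 : (1+4*M) * Real.exp ((1+4*M)*h) ≤ 3*(1+4*M))
    (hεpos : 0 ≤ ε)
    {u vs : ℝ → E} (hu : L96Sol F (Set.Icc 0 h) u) (hvs : L96Sol F (Set.Icc 0 h) vs)
    (hub : ∀ s ∈ Set.Icc 0 h, ‖u s‖ ≤ M) (hvb : ∀ s ∈ Set.Icc 0 h, ‖vs s‖ ≤ M)
    {ν : E} (hνP : ν = L96P ν) (hνε : ‖ν‖ ≤ ε)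
    {m' : E} (hm' : m' = (η/(1+η)) • L96P (u h) + L96Q (u h)
      + (1/(1+η)) • (L96P (vs h) + ν)) :
    ‖m' - vs h‖ + ‖L96P (m' - vs h)‖ ≤
      (1 - h/8) * (‖u 0 - vs 0‖ + ‖L96P (u 0 - vs 0)‖) + 2*ε := by
  have hM0 : (0:ℝ) ≤ M := by linarith
  set L : ℝ := 1 + 4*M with hLdef
  have hL : 5 ≤ L := by rw [hLdef]; linarith
  have hL0 : (0:ℝ) < L := by linarith
  obtain ⟨hkey1, hkey2⟩ := key_contraction h3 hM hh hu hvs hub hvb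
  set e : E := u 0 - vs 0 with hedef
  set δ : E := u h - vs h with hδdef
  set W : ℝ := ‖e‖ with hWdef
  set b : ℝ := ‖L96P e‖ with hbdef
  set a : ℝ := ‖L96Q e‖ with hadef
  set S : ℝ := b + (L * Real.exp (L*h) * W) * h with hSdef
  have hW0 : 0 ≤ W := norm_nonneg _
  have hb0 : 0 ≤ b := norm_nonneg _
  have ha0 : 0 ≤ a := norm_nonneg _
  have haW : a ≤ W := norm_L96Q_le e
  have hS0 : 0 ≤ S := by
    rw [hSdef]
    exact add_nonneg hb0
      (mul_nonneg (mul_nonneg (mul_nonneg hL0.le (Real.exp_nonneg _)) hW0) hh.le)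
  set θ : ℝ := η/(1+η) with hθdef
  set c : ℝ := 1/(1+η) with hcdef
  have h1η : (0:ℝ) < 1 + η := by linarith
  have hθ0 : 0 ≤ θ := div_nonneg hη.le h1η.le
  have hθη : θ ≤ η := by
    rw [hθdef, div_le_iff₀ h1η]
    have hηη : 0 ≤ η * η := mul_nonneg hη.le hη.le
    have : η * (1 + η) = η + η * η := by ring
    linarith
  have hc0 : 0 < c := div_pos one_pos h1η
  have hc1 : c ≤ 1 := by
    rw [hcdef, div_le_one h1η]; linarith
  have hc' : c = 1 - θ := by rw [hcdef, hθdef]; field_simp; ring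
  have hE : m' - vs h = θ • L96P δ + L96Q δ + c • ν := by
    rw [hm', hδdef, L96P_sub, hc']
    simp only [L96Q_eq, L96P_sub]
    module
  have hPν : L96P ν = ν := by rw [hνP, L96P_idem]
  have hPE : L96P (m' - vs h) = θ • L96P δ + c • ν := by
    rw [hE, L96P_add, L96P_add, L96P_smul, L96P_smul, L96P_idem, L96P_L96Q, hPν, add_zero]
  have hnPE : ‖L96P (m' - vs h)‖ ≤ θ * ‖L96P δ‖ + ε := by
    rw [hPE]
    refine le_trans (norm_add_le _ _) ?_
    rw [norm_smul, norm_smul, Real.norm_eq_abs, Real.norm_eq_abs,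
      abs_of_nonneg hθ0, abs_of_nonneg hc0.le]
    have : c * ‖ν‖ ≤ 1 * ε := mul_le_mul hc1 hνε (norm_nonneg _) zero_le_one
    linarith
  have hnE : ‖m' - vs h‖ ≤ θ * ‖L96P δ‖ + ‖L96Q δ‖ + ε := by
    rw [hE]
    refine le_trans (norm_add_le _ _) ?_
    have h5 : ‖θ • L96P δ + L96Q δ‖ ≤ θ * ‖L96P δ‖ + ‖L96Q δ‖ := by
      refine le_trans (norm_add_le _ _) ?_
      rw [norm_smul, Real.norm_eq_abs, abs_of_nonneg hθ0]
    have h6 : ‖c • ν‖ ≤ ε := by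
      rw [norm_smul, Real.norm_eq_abs, abs_of_nonneg hc0.le]
      have : c * ‖ν‖ ≤ 1 * ε := mul_le_mul hc1 hνε (norm_nonneg _) zero_le_one
      linarith
    linarith
  have hPδ : ‖L96P δ‖ ≤ S := hkey1
  have hexph1 : Real.exp (-h) ≤ 1 := exp_neg_nonneg_le_one hh.le
  have h1e : 0 ≤ 1 - Real.exp (-h) := by linarith
  have hQδ : ‖L96Q δ‖ ≤ Real.exp (-(h/2)) * a
      + (4*M*Real.sqrt (1 - Real.exp (-h))) * S := by
    have hsq : ‖L96Q δ‖^2 ≤ Real.exp (-h) * a^2 + (4*M*S)^2 * (1 - Real.exp (-h)) := by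
      refine le_trans hkey2 ?_
      apply le_of_eq; ring
    have h7 : ‖L96Q δ‖ = Real.sqrt (‖L96Q δ‖^2) := (Real.sqrt_sq (norm_nonneg _)).symm
    rw [h7]
    refine le_trans (Real.sqrt_le_sqrt hsq) ?_
    have h9 := sqrt_add_le' (mul_nonneg (Real.exp_nonneg (-h)) (sq_nonneg a))
      (mul_nonneg (sq_nonneg (4*M*S)) h1e)
    refine le_trans h9 ?_
    have h10 : Real.sqrt (Real.exp (-h) * a^2) = Real.exp (-(h/2)) * a := by
      have hexp2 : Real.exp (-h) = (Real.exp (-(h/2)))^2 := by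
        rw [sq, ← Real.exp_add]; ring_nf
      rw [Real.sqrt_mul (Real.exp_nonneg _), Real.sqrt_sq ha0, hexp2,
        Real.sqrt_sq (Real.exp_nonneg _)]
    have h11 : Real.sqrt ((4*M*S)^2 * (1 - Real.exp (-h)))
        = (4*M*Real.sqrt (1 - Real.exp (-h))) * S := by
      rw [Real.sqrt_mul (sq_nonneg _), Real.sqrt_sq (mul_nonneg (by linarith : (0:ℝ) ≤ 4*M) hS0)]
      ring
    rw [h10, h11]
  set g : ℝ := 4*M*Real.sqrt (1 - Real.exp (-h)) with hgdef
  have hg0 : 0 ≤ g := by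
    rw [hgdef]
    exact mul_nonneg (by linarith) (Real.sqrt_nonneg _)
  clear_value L e δ W b a S θ c g
  have hgθ : g + 2*θ ≤ 1/(48*L) := by linarith [hsmall, hθη]
  have hLE : 0 ≤ L * Real.exp (L*h) * h :=
    mul_nonneg (mul_nonneg hL0.le (Real.exp_nonneg _)) hh.le
  have hgθ0 : 0 ≤ g + 2*θ := by linarith
  have hgθL : L*(g+2*θ) ≤ 1/48 := by
    have e0 := mul_le_mul_of_nonneg_left hgθ hL0.le
    have hLL : L*(1/(48*L)) = 1/48 := by
      rw [mul_one_div, div_eq_div_iff (ne_of_gt (by linarith : (0:ℝ) < 48*L))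
        (by norm_num : (48:ℝ) ≠ 0)]
      ring
    linarith
  have hcoef : (g + 2*θ) * (L * Real.exp (L*h) * h) ≤ h/16 := by
    have h12 : L * Real.exp (L*h) * h ≤ 3*L*h :=
      mul_le_mul_of_nonneg_right hC2 hh.le
    have e1 : (g+2*θ) * (L*Real.exp (L*h)*h) ≤ (g+2*θ) * (3*L*h) :=
      mul_le_mul_of_nonneg_left h12 hgθ0
    have e2 : (g+2*θ) * (3*L*h) = (3*h) * (L*(g+2*θ)) := by ring
    have e3 : (3*h) * (L*(g+2*θ)) ≤ (3*h) * (1/48) :=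
      mul_le_mul_of_nonneg_left hgθL (by linarith)
    have e4 : (3*h) * ((1:ℝ)/48) = h/16 := by ring
    linarith
  have hα48 : g + 2*θ ≤ 1 - h/8 := by
    have h14 : (1:ℝ)/(48*L) ≤ 1/48 :=
      one_div_le_one_div_of_le (by norm_num) (by linarith)
    have h15 : (1:ℝ)/48 ≤ 1 - h/8 := by norm_num; linarith
    linarith
  have hE2 : Real.exp (-(h/2)) ≤ 1 - h/4 := exp_neg_half_le hh.le (by linarith)
  have A1 : ‖L96Q δ‖ ≤ (1-h/4)*a + g*S := by
    refine le_trans hQδ ?_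
    have := mul_le_mul_of_nonneg_right hE2 ha0
    linarith
  have A2 : θ * ‖L96P δ‖ ≤ θ * S := mul_le_mul_of_nonneg_left hPδ hθ0
  have A3 : g*S + 2*(θ*S) = (g+2*θ)*b + ((g+2*θ)*(L*Real.exp (L*h)*h)) * W := by
    rw [hSdef]; ring
  have A4 : (g+2*θ) * b ≤ (1-h/8) * b :=
    mul_le_mul_of_nonneg_right hα48 hb0
  have A5 : ((g+2*θ)*(L*Real.exp (L*h)*h)) * W ≤ (h/16) * W :=
    mul_le_mul_of_nonneg_right hcoef hW0
  have A6 : (1-h/4) * a ≤ (1-h/4) * W := mul_le_mul_of_nonneg_left haW (by linarith)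
  have A7 : (1-h/4)*W + (h/16)*W ≤ (1-h/8)*W := by
    have he : (1-h/8)*W - ((1-h/4)*W + (h/16)*W) = (h*W)/16 := by ring
    linarith [mul_nonneg hh.le hW0]
  have A8 : (1-h/8)*(W + b) = (1-h/8)*W + (1-h/8)*b := by ring
  linarith [hnE, hnPE, A1, A2, A3, A4, A5, A6, A7, A8]


set_option maxHeartbeats 1000000 in
/-- accuracy of discrete 3DVAR with bounded noise, in the norm
`‖z‖ = |z| + |Pz|`. -/
theorem l96_discrete_3dvar_accuracy {J J' : ℕ} [NeZero J] (hJ' : 1 ≤ J') (hJ : J = 3 * J')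
    (F K β : ℝ) (hF : 0 < F)
    (hK : K = 2 * J * F ^ 2) (hβdef : β = 2 * (2 * Real.sqrt K - 1)) (hβ : 0 < β) :
    ∀ R0 : ℝ, 0 < R0 →
      ∃ h η α ε0 : ℝ, 0 < h ∧ 0 < η ∧ 0 < α ∧ α < 1 ∧ 0 < ε0 ∧
        ∀ v : ℝ → EuclideanSpace ℝ (ZMod J), L96Sol F (Set.Ici 0) v →
        (∀ t : ℝ, 0 ≤ t → ‖v t‖ ^ 2 ≤ K) →
        ∀ ε : ℝ, 0 < ε → ε ≤ ε0 →
        ∀ ν : ℕ → EuclideanSpace ℝ (ZMod J),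
          (∀ k : ℕ, 1 ≤ k → ν k = L96P (ν k) ∧ ‖ν k‖ ≤ ε) →
        ∀ m : ℕ → EuclideanSpace ℝ (ZMod J),
          ‖m 0 - v 0‖ + ‖L96P (m 0 - v 0)‖ ≤ R0 →
        ∀ u : ℕ → ℝ → EuclideanSpace ℝ (ZMod J),
          (∀ k : ℕ, L96Sol F (Set.Icc 0 h) (u k) ∧ u k 0 = m k) →
          (∀ k : ℕ, m (k + 1) =
            (η / (1 + η)) • L96P (u k h) + L96Q (u k h)
              + (1 / (1 + η)) • (L96P (v (((k : ℝ) + 1) * h)) + ν (k + 1))) →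
          (∀ k : ℕ,
            ‖m (k + 1) - v (((k : ℝ) + 1) * h)‖
                + ‖L96P (m (k + 1) - v (((k : ℝ) + 1) * h))‖ ≤
              α * (‖m k - v ((k : ℝ) * h)‖ + ‖L96P (m k - v ((k : ℝ) * h))‖) + 2 * ε) ∧
          Filter.limsup
            (fun k : ℕ => ‖m k - v ((k : ℝ) * h)‖ + ‖L96P (m k - v ((k : ℝ) * h))‖)
            Filter.atTop ≤ 2 * ε / (1 - α) := by
  intro R0 hR0
  have hJ3 : (3:ℕ) ∣ J := ⟨J', hJ⟩
  have hJpos : 0 < (J:ℝ) := by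
    have : 0 < J := Nat.pos_of_ne_zero (NeZero.ne J)
    exact_mod_cast this
  have hK0 : 0 < K := by rw [hK]; positivity
  obtain ⟨sK, hsKdef⟩ : ∃ x : ℝ, x = Real.sqrt K := ⟨_, rfl⟩
  have hsK0 : 0 ≤ sK := by rw [hsKdef]; exact Real.sqrt_nonneg _
  obtain ⟨M, hMdef⟩ : ∃ x : ℝ, x = sK + R0 + 1 := ⟨_, rfl⟩
  have hM1 : 1 ≤ M := by rw [hMdef]; linarith
  have hM0 : 0 < M := by linarith
  obtain ⟨L, hLdef⟩ : ∃ x : ℝ, x = 1 + 4*M := ⟨_, rfl⟩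
  have hL5 : 5 ≤ L := by rw [hLdef]; linarith
  have hL0 : 0 < L := by linarith
  obtain ⟨d, hddef⟩ : ∃ x : ℝ, x = 1/(384*M*L) := ⟨_, rfl⟩
  have h384 : (0:ℝ) < 384*M*L := by
    have : (0:ℝ) < 384*M := by linarith
    exact mul_pos this hL0
  have hd0 : 0 < d := by rw [hddef]; exact div_pos one_pos h384
  have hML : (5:ℝ) ≤ M*L := by
    have := mul_le_mul hM1 hL5 (by norm_num) (by linarith)
    linarith
  have h384ML : (1:ℝ) ≤ 384*M*L := by nlinarith
  have hd1 : d ≤ 1 := by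
    rw [hddef, div_le_one h384]; exact h384ML
  obtain ⟨h, hhdef⟩ : ∃ x : ℝ, x = d^2 := ⟨_, rfl⟩
  have hhpos : 0 < h := by rw [hhdef]; exact pow_pos hd0 2
  have hh1 : h ≤ 1 := by rw [hhdef]; nlinarith [hd0.le, hd1]
  obtain ⟨η, hηdef⟩ : ∃ x : ℝ, x = 1/(192*L) := ⟨_, rfl⟩
  have hηpos : 0 < η := by
    rw [hηdef]; apply div_pos one_pos; linarith
  obtain ⟨α, hαdef⟩ : ∃ x : ℝ, x = 1 - h/8 := ⟨_, rfl⟩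
  have hα0 : 0 < α := by rw [hαdef]; linarith
  have hα1 : α < 1 := by rw [hαdef]; linarith
  obtain ⟨ε0, hε0def⟩ : ∃ x : ℝ, x = h*R0/16 := ⟨_, rfl⟩
  have hε0pos : 0 < ε0 := by
    rw [hε0def]; apply div_pos (mul_pos hhpos hR0); norm_num
  -- numeric conditions for onestep
  have hsqh : Real.sqrt h = d := by rw [hhdef, Real.sqrt_sq hd0.le]
  have hsmall : 4*M*Real.sqrt (1 - Real.exp (-h)) + 2*η ≤ 1/(48*(1+4*M)) := by
    have s1 : Real.sqrt (1 - Real.exp (-h)) ≤ d := by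
      rw [← hsqh]
      exact Real.sqrt_le_sqrt one_sub_exp_neg_le
    have s2 : 4*M*Real.sqrt (1 - Real.exp (-h)) ≤ 4*M*d :=
      mul_le_mul_of_nonneg_left s1 (by linarith)
    have s3 : 4*M*d = 1/(96*L) := by
      rw [hddef, mul_one_div,
        div_eq_div_iff (ne_of_gt h384) (ne_of_gt (by linarith : (0:ℝ) < 96*L))]
      ring
    have s4 : 2*η = 1/(96*L) := by
      rw [hηdef, mul_one_div,
        div_eq_div_iff (ne_of_gt (by linarith : (0:ℝ) < 192*L))
          (ne_of_gt (by linarith : (0:ℝ) < 96*L))]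
      ring
    have s5 : (1:ℝ)/(96*L) + 1/(96*L) = 1/(48*L) := by
      rw [← add_div,
        div_eq_div_iff (ne_of_gt (by linarith : (0:ℝ) < 96*L))
          (ne_of_gt (by linarith : (0:ℝ) < 48*L))]
      ring
    rw [← hLdef]
    refine le_trans (add_le_add_left s2 (2*η)) ?_
    rw [s3, s4, s5]
  have hLh1 : L * h ≤ 1 := by
    have e1 : L*d ≤ 1 := by
      rw [hddef, mul_one_div, div_le_one h384]
      nlinarith
    have e2 : L*h = (L*d)*d := by rw [hhdef]; ring
    rw [e2]
    nlinarith
  have hexp3 : Real.exp (L*h) ≤ 3 := by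
    have := Real.exp_le_exp.2 hLh1
    have h3 : Real.exp 1 ≤ 3 := le_of_lt (lt_trans Real.exp_one_lt_d9 (by norm_num))
    linarith
  have hC2 : (1+4*M) * Real.exp ((1+4*M)*h) ≤ 3*(1+4*M) := by
    rw [← hLdef]
    calc L * Real.exp (L*h) ≤ L * 3 := mul_le_mul_of_nonneg_left hexp3 hL0.le
      _ = 3*L := by ring
  refine ⟨h, η, α, ε0, hhpos, hηpos, hα0, hα1, hε0pos, ?_⟩
  intro v hv hvK ε hεpos hεle ν hν m hm0 u hu hrec
  have hvnorm : ∀ t : ℝ, 0 ≤ t → ‖v t‖ ≤ sK := by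
    intro t ht
    rw [hsKdef]
    exact (Real.le_sqrt (norm_nonneg _) hK0.le).2 (hvK t ht)
  have hfsq : ‖(L96f F : EuclideanSpace ℝ (ZMod J))‖ ≤ sK := by
    have h1 : ‖(L96f F : EuclideanSpace ℝ (ZMod J))‖^2 = J*F^2 := norm_L96f_sq F
    have h2 : (J:ℝ)*F^2 ≤ K := by
      rw [hK]
      have : 0 ≤ (J:ℝ)*F^2 := by positivity
      linarith
    rw [hsKdef, ← Real.sqrt_sq (norm_nonneg _), h1]
    exact Real.sqrt_le_sqrt h2
  -- single step estimate
  have step : ∀ k : ℕ,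
      ‖m k - v ((k:ℝ)*h)‖ + ‖L96P (m k - v ((k:ℝ)*h))‖ ≤ R0 →
      ‖m (k+1) - v (((k:ℝ)+1)*h)‖ + ‖L96P (m (k+1) - v (((k:ℝ)+1)*h))‖ ≤
        α * (‖m k - v ((k:ℝ)*h)‖ + ‖L96P (m k - v ((k:ℝ)*h))‖) + 2*ε := by
    intro k hNk
    obtain ⟨huk, huk0⟩ := hu k
    have ht0 : (0:ℝ) ≤ (k:ℝ)*h := mul_nonneg (Nat.cast_nonneg k) hhpos.le
    set vs : ℝ → EuclideanSpace ℝ (ZMod J) := fun s => v ((k:ℝ)*h + s) with hvsdef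
    have hvsol : L96Sol F (Set.Icc 0 h) vs := sol_shift hv ht0
    have hvs0 : vs 0 = v ((k:ℝ)*h) := by
      show v ((k:ℝ)*h + 0) = _
      rw [add_zero]
    have hvsh : vs h = v (((k:ℝ)+1)*h) := by
      show v ((k:ℝ)*h + h) = _
      congr 1
      ring
    have hvsb : ∀ s ∈ Set.Icc 0 h, ‖vs s‖ ≤ M := by
      intro s hs
      refine le_trans (hvnorm _ (add_nonneg ht0 hs.1)) ?_
      rw [hMdef]; linarith
    have hmknorm : ‖u k 0‖ ≤ M := by
      rw [huk0]
      calc ‖m k‖ = ‖(m k - v ((k:ℝ)*h)) + v ((k:ℝ)*h)‖ := by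
            rw [sub_add_cancel]
        _ ≤ ‖m k - v ((k:ℝ)*h)‖ + ‖v ((k:ℝ)*h)‖ := norm_add_le _ _
        _ ≤ R0 + sK := by
            have := norm_nonneg (L96P (m k - v ((k:ℝ)*h)))
            have := hvnorm _ ht0
            linarith
        _ ≤ M := by rw [hMdef]; linarith
    have hubnd : ∀ s ∈ Set.Icc 0 h, ‖u k s‖ ≤ M :=
      sol_norm_le huk hmknorm (le_trans hfsq (by rw [hMdef]; linarith))
    have hν' := hν (k+1) (Nat.succ_le_succ (Nat.zero_le k))
    have hm' : m (k+1) = (η/(1+η)) • L96P (u k h) + L96Q (u k h)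
        + (1/(1+η)) • (L96P (vs h) + ν (k+1)) := by
      rw [hrec k, hvsh]
    have hos := onestep hJ3 hM1 hhpos hh1 hηpos hsmall hC2 hεpos.le
      huk hvsol hubnd hvsb hν'.1 hν'.2 hm'
    rw [hvsh, hvs0, huk0] at hos
    rw [hαdef]
    exact hos
  -- uniform bound by induction
  have bound_all : ∀ k : ℕ,
      ‖m k - v ((k:ℝ)*h)‖ + ‖L96P (m k - v ((k:ℝ)*h))‖ ≤ R0 := by
    intro k
    induction k with
    | zero => simpa using hm0
    | succ k ih =>
      have hstep := step k ih
      have hcast : ((k+1:ℕ):ℝ) = (k:ℝ)+1 := by push_cast; ring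
      rw [hcast]
      have h1 : α * (‖m k - v ((k:ℝ)*h)‖ + ‖L96P (m k - v ((k:ℝ)*h))‖) ≤ α * R0 :=
        mul_le_mul_of_nonneg_left ih hα0.le
      have h2 : ε ≤ h*R0/16 := by rw [← hε0def]; exact hεle
      have h3 : α * R0 = R0 - h*R0/8 := by rw [hαdef]; ring
      linarith
  refine ⟨fun k => step k (bound_all k), ?_⟩
  -- geometric decay and limsup
  have h1α : (0:ℝ) < 1 - α := by linarith
  obtain ⟨c, hcdef⟩ : ∃ x : ℝ, x = 2*ε/(1-α) := ⟨_, rfl⟩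
  have hc0 : 0 ≤ c := by
    rw [hcdef]; apply div_nonneg (by linarith) h1α.le
  have geo : ∀ k : ℕ,
      ‖m k - v ((k:ℝ)*h)‖ + ‖L96P (m k - v ((k:ℝ)*h))‖ ≤ α^k * R0 + c := by
    intro k
    induction k with
    | zero =>
      simp only [pow_zero, one_mul]
      linarith [bound_all 0]
    | succ k ih =>
      have hstep := step k (bound_all k)
      have hcast : ((k+1:ℕ):ℝ) = (k:ℝ)+1 := by push_cast; ring
      rw [hcast]
      have h1 : α * (‖m k - v ((k:ℝ)*h)‖ + ‖L96P (m k - v ((k:ℝ)*h))‖)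
          ≤ α * (α^k * R0 + c) := mul_le_mul_of_nonneg_left ih hα0.le
      have h2 : α * (α^k * R0 + c) = α^(k+1) * R0 + α*c := by ring
      have h3 : α*c + 2*ε = c := by
        rw [hcdef]
        field_simp
        ring
      linarith
  have htend : Filter.Tendsto (fun k:ℕ => α^k * R0 + c) Filter.atTop (nhds c) := by
    have h0 := tendsto_pow_atTop_nhds_zero_of_lt_one hα0.le hα1
    have h1 := (h0.mul_const R0).add_const c
    simpa using h1
  refine le_trans (Filter.limsup_le_limsup (Filter.Eventually.of_forall geo) ?_ ?_) ?_
  · refine Filter.IsBoundedUnder.isCoboundedUnder_le ?_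
    refine Filter.isBoundedUnder_of ⟨0, fun k => ?_⟩
    exact add_nonneg (norm_nonneg _) (norm_nonneg _)
  · exact htend.isBoundedUnder_le
  · exact le_of_eq (htend.limsup_eq.trans hcdef)
end
end
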